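/- arXiv:2410.13635 — 7 statements merged into one kernel-verified Lean document; each statement's English description precedes it below -/
import Mathlib

section
/- For every integer r ≥ 0 there exists a constant C > 0, depending only on r, such that for all real numbers a < b and every real polynomial p of degree at most r, one has ∫_a^b p′(t)² dt ≤ C² (b−a)^{−2} ∫_a^b p(t)² dt, i.e. ‖p′‖_{L²(a,b)} ≤ C (b−a)^{−1} ‖p‖_{L²(a,b)}. -/
open scoped Polynomial
open Polynomial MeasureTheory

private lemma polyMul_intervalIntegrable (p q : ℝ[X]) (a b : ℝ) :
    IntervalIntegrable (fun t => p.eval t * q.eval t) volume a b :=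
  (p.continuous.mul q.continuous).intervalIntegrable a b

private lemma inverse_estimate_unit (r : ℕ) :
    ∃ C : ℝ, 0 < C ∧ ∀ q : ℝ[X], q.natDegree ≤ r →
      (∫ t in (0:ℝ)..1, (q.derivative.eval t) ^ 2) ≤
        C ^ 2 * ∫ t in (0:ℝ)..1, (q.eval t) ^ 2 := by
  set E := Polynomial.degreeLT ℝ (r + 1) with hE
  letI core : InnerProductSpace.Core ℝ E :=
  { inner := fun x y => ∫ t in (0:ℝ)..1, (x : ℝ[X]).eval t * (y : ℝ[X]).eval t
    conj_inner_symm := by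
      intro x y
      simp only [starRingEnd_apply, star_trivial, mul_comm]
    re_inner_nonneg := by
      intro x
      simp only [RCLike.re_to_real]
      refine intervalIntegral.integral_nonneg (by norm_num) fun t _ => mul_self_nonneg _
    add_left := by
      intro x y z
      simp only [Submodule.coe_add, eval_add, add_mul]
      exact intervalIntegral.integral_add (polyMul_intervalIntegrable _ _ _ _)
        (polyMul_intervalIntegrable _ _ _ _)
    smul_left := by
      intro x y c
      simp only [starRingEnd_apply, star_trivial, SetLike.val_smul, smul_eq_mul,
        Polynomial.eval_smul, smul_eq_mul, mul_assoc]
      rw [← intervalIntegral.integral_const_mul]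
    definite := by
      intro x hx
      by_contra hx0
      have hxp : (x : ℝ[X]) ≠ 0 := fun h => hx0 (Subtype.ext h)
      set f : ℝ → ℝ := fun t => (x : ℝ[X]).eval t * (x : ℝ[X]).eval t with hf
      have hnn : 0 ≤ f := fun t => mul_self_nonneg _
      have hfi : IntervalIntegrable f volume 0 1 := polyMul_intervalIntegrable _ _ _ _
      have hroots : (Set.Ioc (0:ℝ) 1 \ Function.support f).Finite := by
        refine (Polynomial.finite_setOf_isRoot hxp).subset ?_
        intro t ht
        have := ht.2
        simp only [Function.mem_support, hf, ne_eq, not_not, mul_self_eq_zero] at this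
        exact this
      have hmeas : 0 < volume (Function.support f ∩ Set.Ioc (0:ℝ) 1) := by
        have h0 : volume (Set.Ioc (0:ℝ) 1 \ Function.support f) = 0 :=
          hroots.measure_zero _
        have : Function.support f ∩ Set.Ioc (0:ℝ) 1 =
            Set.Ioc (0:ℝ) 1 \ (Set.Ioc (0:ℝ) 1 \ Function.support f) := by
          ext t; simp only [Set.mem_inter_iff, Set.mem_diff]; tauto
        rw [this, measure_diff_null h0]
        simp [Real.volume_Ioc]
      have hpos : 0 < ∫ t in (0:ℝ)..1, f t := by
        rw [intervalIntegral.integral_pos_iff_support_of_nonneg_ae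
          (Filter.Eventually.of_forall hnn) hfi]
        exact ⟨one_pos, hmeas⟩
      exact ne_of_gt hpos hx }
  letI : NormedAddCommGroup E := core.toNormedAddCommGroup
  letI : InnerProductSpace ℝ E := InnerProductSpace.ofCore core.toCore
  haveI : FiniteDimensional ℝ E := (Polynomial.degreeLTEquiv ℝ (r + 1)).symm.finiteDimensional
  let D : E →ₗ[ℝ] E :=
  { toFun := fun x => ⟨derivative (x : ℝ[X]),
      Polynomial.mem_degreeLT.2 (lt_of_le_of_lt degree_derivative_le
        (Polynomial.mem_degreeLT.1 x.2))⟩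
    map_add' := by intro x y; ext1; simp
    map_smul' := by intro c x; ext1; simp }
  let Dc : E →L[ℝ] E := LinearMap.toContinuousLinearMap D
  refine ⟨‖Dc‖ + 1, by positivity, ?_⟩
  intro q hq
  have hmem : q ∈ Polynomial.degreeLT ℝ (r + 1) := by
    refine Polynomial.mem_degreeLT.2 (lt_of_le_of_lt degree_le_natDegree ?_)
    exact_mod_cast Nat.lt_succ_of_le hq
  set x : E := ⟨q, hmem⟩ with hx
  have h1 : (∫ t in (0:ℝ)..1, (q.derivative.eval t) ^ 2) = ‖Dc x‖ ^ 2 := by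
    rw [← real_inner_self_eq_norm_sq]
    show _ = ∫ t in (0:ℝ)..1,
      ((Dc x : ℝ[X]).eval t) * ((Dc x : ℝ[X]).eval t)
    simp only [sq]
    rfl
  have h2 : (∫ t in (0:ℝ)..1, (q.eval t) ^ 2) = ‖x‖ ^ 2 := by
    rw [← real_inner_self_eq_norm_sq]
    show _ = ∫ t in (0:ℝ)..1, (q.eval t) * (q.eval t)
    simp only [sq]
  rw [h1, h2]
  have hle : ‖Dc x‖ ≤ (‖Dc‖ + 1) * ‖x‖ := by
    refine (Dc.le_opNorm x).trans ?_
    have := norm_nonneg x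
    nlinarith [norm_nonneg Dc]
  calc ‖Dc x‖ ^ 2 ≤ ((‖Dc‖ + 1) * ‖x‖) ^ 2 := by
        exact pow_le_pow_left₀ (norm_nonneg _) hle 2
    _ = (‖Dc‖ + 1) ^ 2 * ‖x‖ ^ 2 := by ring

/-- One-dimensional inverse estimate for polynomials of degree at most `r`:
the `L²(a,b)` norm of the derivative is bounded by `C (b-a)⁻¹` times the
`L²(a,b)` norm of the polynomial, with `C` depending only on `r`. -/
theorem polynomial_inverse_estimate (r : ℕ) :
    ∃ C : ℝ, 0 < C ∧ ∀ a b : ℝ, a < b → ∀ p : Polynomial ℝ, p.natDegree ≤ r →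
      (∫ t in a..b, (p.derivative.eval t) ^ 2) ≤
        C ^ 2 * ((b - a)⁻¹) ^ 2 * ∫ t in a..b, (p.eval t) ^ 2 := by
  obtain ⟨K, hK, hkey⟩ := inverse_estimate_unit r
  refine ⟨K, hK, ?_⟩
  intro a b hab p hp
  set c := b - a with hc
  have hc0 : 0 < c := sub_pos.2 hab
  have hcne : c ≠ 0 := ne_of_gt hc0
  set q : ℝ[X] := p.comp (Polynomial.C c * X + Polynomial.C a) with hq
  have hqdeg : q.natDegree ≤ r := by
    rw [hq, natDegree_comp, natDegree_linear hcne, mul_one]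
    exact hp
  have hqeval : ∀ t : ℝ, q.eval t = p.eval (c * t + a) := by
    intro t; simp [hq, eval_comp]
  have hqder : ∀ t : ℝ, q.derivative.eval t = c * p.derivative.eval (c * t + a) := by
    intro t
    rw [hq, derivative_comp]
    simp [eval_comp]
  have hint1 : (∫ t in (0:ℝ)..1, (q.eval t) ^ 2) = c⁻¹ * ∫ t in a..b, (p.eval t) ^ 2 := by
    have := intervalIntegral.integral_comp_mul_add (a := (0:ℝ)) (b := 1)
      (fun t => (p.eval t) ^ 2) hcne a
    simp only [mul_zero, zero_add, mul_one, smul_eq_mul] at this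
    calc (∫ t in (0:ℝ)..1, (q.eval t) ^ 2)
        = ∫ t in (0:ℝ)..1, (p.eval (c * t + a)) ^ 2 := by
          simp_rw [hqeval]
      _ = c⁻¹ * ∫ t in a..b, (p.eval t) ^ 2 := by
          rw [this]; congr 1 <;> rw [hc] <;> ring_nf
  have hint2 : (∫ t in (0:ℝ)..1, (q.derivative.eval t) ^ 2)
      = c * ∫ t in a..b, (p.derivative.eval t) ^ 2 := by
    have := intervalIntegral.integral_comp_mul_add (a := (0:ℝ)) (b := 1)
      (fun t => (p.derivative.eval t) ^ 2) hcne a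
    simp only [mul_zero, zero_add, mul_one, smul_eq_mul] at this
    calc (∫ t in (0:ℝ)..1, (q.derivative.eval t) ^ 2)
        = ∫ t in (0:ℝ)..1, c ^ 2 * (p.derivative.eval (c * t + a)) ^ 2 := by
          simp_rw [hqder]; congr 1; ext t; ring
      _ = c ^ 2 * ∫ t in (0:ℝ)..1, (p.derivative.eval (c * t + a)) ^ 2 :=
          intervalIntegral.integral_const_mul _ _
      _ = c ^ 2 * (c⁻¹ * ∫ t in a..b, (p.derivative.eval t) ^ 2) := by
          rw [this]; congr 2 <;> rw [hc] <;> ring_nf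
      _ = c * ∫ t in a..b, (p.derivative.eval t) ^ 2 := by
          field_simp
  have hmain := hkey q hqdeg
  rw [hint1, hint2] at hmain
  have : (∫ t in a..b, (p.derivative.eval t) ^ 2)
      ≤ K ^ 2 * c⁻¹ * c⁻¹ * ∫ t in a..b, (p.eval t) ^ 2 := by
    have h := mul_le_mul_of_nonneg_left hmain (le_of_lt (inv_pos.2 hc0))
    rw [← mul_assoc] at h
    rw [inv_mul_cancel₀ hcne, one_mul] at h
    calc (∫ t in a..b, (p.derivative.eval t) ^ 2)
        ≤ c⁻¹ * (K ^ 2 * (c⁻¹ * ∫ t in a..b, (p.eval t) ^ 2)) := h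
      _ = K ^ 2 * c⁻¹ * c⁻¹ * ∫ t in a..b, (p.eval t) ^ 2 := by ring
  calc (∫ t in a..b, (p.derivative.eval t) ^ 2)
      ≤ K ^ 2 * c⁻¹ * c⁻¹ * ∫ t in a..b, (p.eval t) ^ 2 := this
    _ = K ^ 2 * (c⁻¹) ^ 2 * ∫ t in a..b, (p.eval t) ^ 2 := by ring
end

section
/- For every integer r ≥ 0 there exists a constant C > 0, depending only on r, with the following property: for every T > 0, all real numbers a, b with 0 ≤ a < b ≤ T, every real polynomial w of degree at most r, and every real polynomial q of degree at most r satisfying ∫_a^b (φ_T(t)·w(t) − q(t))·p(t) dt = 0 for every real polynomial p of degree at most r, one has ‖φ_T·w − q‖_{L²(a,b)} ≤ C (b−a) ‖w‖_{L²(a,b)}. -/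
/-- Approximation property of the `L²(a,b)`-orthogonal projection onto polynomials of
degree at most `r`, applied to `φ_T · w` with `φ_T(t) = T exp((T-t)/T)` and `w` a
polynomial of degree at most `r`. -/
theorem proj_exp_weight_L2_estimate (r : ℕ) :
    ∃ C : ℝ, 0 < C ∧ ∀ T a b : ℝ, 0 < T → 0 ≤ a → a < b → b ≤ T →
      ∀ w q : Polynomial ℝ, w.natDegree ≤ r → q.natDegree ≤ r →
        (∀ p : Polynomial ℝ, p.natDegree ≤ r →
          (∫ t in a..b,
            (T * Real.exp ((T - t) / T) * w.eval t - q.eval t) * p.eval t) = 0) →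
        Real.sqrt (∫ t in a..b,
            (T * Real.exp ((T - t) / T) * w.eval t - q.eval t) ^ 2) ≤
          C * (b - a) * Real.sqrt (∫ t in a..b, (w.eval t) ^ 2) := by
  refine ⟨Real.exp 1, Real.exp_pos 1, ?_⟩
  intro T a b hT ha hab hbT w q hw hq horth
  set c : ℝ := T * Real.exp ((T - a) / T) with hc
  have hcexp : Continuous fun t : ℝ => Real.exp ((T - t) / T) :=
    Real.continuous_exp.comp ((continuous_const.sub continuous_id).div_const T)
  have hcont_g : Continuous fun t : ℝ => T * Real.exp ((T - t) / T) * w.eval t :=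
    (continuous_const.mul hcexp).mul w.continuous
  set f : ℝ → ℝ := fun t => T * Real.exp ((T - t) / T) * w.eval t - q.eval t with hf
  set h : ℝ → ℝ := fun t => q.eval t - c * w.eval t with hh
  have hcf : Continuous f := hcont_g.sub q.continuous
  have hch : Continuous h := q.continuous.sub (continuous_const.mul w.continuous)
  -- orthogonality against q - C c * w
  have hperp : (∫ t in a..b, f t * h t) = 0 := by
    have hdeg : (q - Polynomial.C c * w).natDegree ≤ r := by
      refine le_trans (Polynomial.natDegree_sub_le _ _) (max_le hq ?_)
      exact le_trans (Polynomial.natDegree_C_mul_le c w) hw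
    have := horth (q - Polynomial.C c * w) hdeg
    simpa [hf, hh, Polynomial.eval_sub, Polynomial.eval_mul, Polynomial.eval_C] using this
  have i1 : IntervalIntegrable (fun t => f t ^ 2) MeasureTheory.volume a b :=
    (hcf.pow 2).intervalIntegrable a b
  have i2 : IntervalIntegrable (fun t => 2 * (f t * h t)) MeasureTheory.volume a b :=
    (continuous_const.mul (hcf.mul hch)).intervalIntegrable a b
  have i3 : IntervalIntegrable (fun t => h t ^ 2) MeasureTheory.volume a b :=
    (hch.pow 2).intervalIntegrable a b
  -- Pythagoras: ∫ f² ≤ ∫ (f+h)²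
  have key : (∫ t in a..b, f t ^ 2) ≤ ∫ t in a..b, (f t + h t) ^ 2 := by
    have expand : (∫ t in a..b, (f t + h t) ^ 2)
        = (∫ t in a..b, f t ^ 2)
          + ((∫ t in a..b, 2 * (f t * h t)) + ∫ t in a..b, h t ^ 2) := by
      rw [← intervalIntegral.integral_add i2 i3,
        ← intervalIntegral.integral_add i1 (i2.add i3)]
      congr 1
      funext t
      ring
    have hz : (∫ t in a..b, 2 * (f t * h t)) = 0 := by
      rw [intervalIntegral.integral_const_mul, hperp, mul_zero]
    have hnn : 0 ≤ ∫ t in a..b, h t ^ 2 :=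
      intervalIntegral.integral_nonneg hab.le (fun t _ => sq_nonneg _)
    rw [expand, hz, zero_add]
    linarith
  -- pointwise bound for f + h
  have hbound : ∀ t ∈ Set.Icc a b,
      (f t + h t) ^ 2 ≤ (Real.exp 1 * (b - a)) ^ 2 * w.eval t ^ 2 := by
    intro t ht
    have hfh : f t + h t = (T * Real.exp ((T - t) / T) - c) * w.eval t := by
      simp only [hf, hh]; ring
    have habs : |T * Real.exp ((T - t) / T) - c| ≤ Real.exp 1 * (b - a) := by
      have hta : a ≤ t := ht.1
      have htb : t ≤ b := ht.2
      have hmono : Real.exp ((T - t) / T) ≤ Real.exp ((T - a) / T) := by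
        exact Real.exp_le_exp.2 (by gcongr)
      have hle : T * Real.exp ((T - t) / T) ≤ c := by
        rw [hc]
        exact mul_le_mul_of_nonneg_left hmono hT.le
      rw [abs_sub_comm, abs_of_nonneg (by linarith)]
      -- c - T e^{(T-t)/T} = T e^{(T-a)/T} (1 - e^{-(t-a)/T}) ≤ e^{(T-a)/T} (t-a)
      have hu : (0:ℝ) ≤ (t - a) / T := div_nonneg (by linarith) hT.le
      have h1 : 1 - (t - a) / T ≤ Real.exp (-((t - a) / T)) := by
        have := Real.add_one_le_exp (-((t - a) / T))
        linarith
      have hsplit : (T - t) / T = (T - a) / T + (-((t - a) / T)) := by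
        field_simp
        ring
      have h2 : c - T * Real.exp ((T - t) / T)
          = T * Real.exp ((T - a) / T) * (1 - Real.exp (-((t - a) / T))) := by
        rw [hsplit, Real.exp_add, hc]; ring
      have h3 : 1 - Real.exp (-((t - a) / T)) ≤ (t - a) / T := by linarith
      have h4 : T * Real.exp ((T - a) / T) * (1 - Real.exp (-((t - a) / T)))
          ≤ T * Real.exp ((T - a) / T) * ((t - a) / T) := by
        apply mul_le_mul_of_nonneg_left h3
        positivity
      have h5 : T * Real.exp ((T - a) / T) * ((t - a) / T)
          = Real.exp ((T - a) / T) * (t - a) := by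
        field_simp
      have h6 : Real.exp ((T - a) / T) ≤ Real.exp 1 := by
        apply Real.exp_le_exp.2
        rw [div_le_one hT]
        linarith
      have h7 : Real.exp ((T - a) / T) * (t - a) ≤ Real.exp 1 * (b - a) := by
        apply mul_le_mul h6 (by linarith) (by linarith) (Real.exp_pos 1).le
      linarith [h2, h4, h5.le, h7]
    have hsq : (T * Real.exp ((T - t) / T) - c) ^ 2 ≤ (Real.exp 1 * (b - a)) ^ 2 := by
      have := sq_abs (T * Real.exp ((T - t) / T) - c)
      calc (T * Real.exp ((T - t) / T) - c) ^ 2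
          = |T * Real.exp ((T - t) / T) - c| ^ 2 := (sq_abs _).symm
        _ ≤ (Real.exp 1 * (b - a)) ^ 2 := by
            apply pow_le_pow_left₀ (abs_nonneg _) habs _
    calc (f t + h t) ^ 2 = (T * Real.exp ((T - t) / T) - c) ^ 2 * w.eval t ^ 2 := by
          rw [hfh]; ring
      _ ≤ (Real.exp 1 * (b - a)) ^ 2 * w.eval t ^ 2 :=
          mul_le_mul_of_nonneg_right hsq (sq_nonneg _)
  have ifh : IntervalIntegrable (fun t => (f t + h t) ^ 2) MeasureTheory.volume a b :=
    ((hcf.add hch).pow 2).intervalIntegrable a b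
  have iw : IntervalIntegrable (fun t => (Real.exp 1 * (b - a)) ^ 2 * w.eval t ^ 2)
      MeasureTheory.volume a b :=
    (continuous_const.mul (w.continuous.pow 2)).intervalIntegrable a b
  have key2 : (∫ t in a..b, (f t + h t) ^ 2)
      ≤ (Real.exp 1 * (b - a)) ^ 2 * ∫ t in a..b, w.eval t ^ 2 := by
    rw [← intervalIntegral.integral_const_mul]
    exact intervalIntegral.integral_mono_on hab.le ifh iw hbound
  have final : (∫ t in a..b, f t ^ 2)
      ≤ (Real.exp 1 * (b - a)) ^ 2 * ∫ t in a..b, w.eval t ^ 2 := key.trans key2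
  have := Real.sqrt_le_sqrt final
  calc Real.sqrt (∫ t in a..b, f t ^ 2)
      ≤ Real.sqrt ((Real.exp 1 * (b - a)) ^ 2 * ∫ t in a..b, w.eval t ^ 2) := this
    _ = Real.exp 1 * (b - a) * Real.sqrt (∫ t in a..b, w.eval t ^ 2) := by
        rw [Real.sqrt_mul (sq_nonneg _), Real.sqrt_sq (mul_nonneg (Real.exp_pos 1).le (by linarith))]
end

section
/- Let H be a real inner product space, let U ⊆ V ⊆ H be linear subspaces with U complete (for instance finite-dimensional), and let P : H → H denote the orthogonal projection onto U. Let s : H × H → ℝ be a bilinear form and let 0 < μ̌ and μ̂ > 0 be such that μ̌‖w‖² ≤ s(w, w) ≤ μ̂‖w‖² for every w ∈ V with P w = 0. Define m(x, y) := ⟨P x, P y⟩ + s(x − P x, y − P y). Then for every v ∈ V, min{1, μ̌}·‖v‖² ≤ m(v, v) ≤ max{1, μ̂}·‖v‖². -/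
open RealInnerProductSpace

/-- Stability transfer for virtual-element-type discrete bilinear forms: a two-sided
bound for the stabilizing form `s` on the kernel of the orthogonal projection `P`
onto `U` implies a two-sided bound for `m(x,y) = ⟪P x, P y⟫ + s(x - P x, y - P y)`
on `V`. -/
theorem discrete_form_stability
    {H : Type*} [NormedAddCommGroup H] [InnerProductSpace ℝ H]
    (U V : Submodule ℝ H) [CompleteSpace U] (hUV : U ≤ V)
    (s : H →ₗ[ℝ] H →ₗ[ℝ] ℝ) (μc μh : ℝ) (hμc : 0 < μc) (hμh : 0 < μh)
    (hs : ∀ w ∈ V, (Submodule.orthogonalProjectionOnto U w : H) = 0 →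
      μc * ‖w‖ ^ 2 ≤ s w w ∧ s w w ≤ μh * ‖w‖ ^ 2) :
    ∀ v ∈ V,
      min 1 μc * ‖v‖ ^ 2 ≤
          ⟪(Submodule.orthogonalProjectionOnto U v : H), (Submodule.orthogonalProjectionOnto U v : H)⟫ +
            s (v - (Submodule.orthogonalProjectionOnto U v : H)) (v - (Submodule.orthogonalProjectionOnto U v : H)) ∧
        ⟪(Submodule.orthogonalProjectionOnto U v : H), (Submodule.orthogonalProjectionOnto U v : H)⟫ +
            s (v - (Submodule.orthogonalProjectionOnto U v : H)) (v - (Submodule.orthogonalProjectionOnto U v : H)) ≤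
          max 1 μh * ‖v‖ ^ 2 := by
  intro v hv
  set p : H := (Submodule.orthogonalProjectionOnto U v : H) with hp
  set w : H := v - p with hwdef
  have hpU : p ∈ U := (Submodule.orthogonalProjectionOnto U v).2
  have hwV : w ∈ V := V.sub_mem hv (hUV hpU)
  have hworth : w ∈ Uᗮ := Submodule.sub_starProjection_mem_orthogonal (K := U) v
  have hPw : (Submodule.orthogonalProjectionOnto U w : H) = 0 := by
    have := Submodule.orthogonalProjectionOnto_eq_zero_iff.mpr hworth
    rw [this]; rfl
  obtain ⟨h1, h2⟩ := hs w hwV hPw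
  have hinner0 : ⟪p, w⟫ = 0 := (hworth p hpU)
  have hpyth : ‖v‖ ^ 2 = ‖p‖ ^ 2 + ‖w‖ ^ 2 := by
    have hv' : v = p + w := by rw [hwdef]; abel
    rw [hv', norm_add_sq_real, hinner0]; ring
  have hpp : ⟪p, p⟫ = ‖p‖ ^ 2 := real_inner_self_eq_norm_sq p
  have hnp : (0:ℝ) ≤ ‖p‖ ^ 2 := sq_nonneg _
  have hnw : (0:ℝ) ≤ ‖w‖ ^ 2 := sq_nonneg _
  constructor
  · have hmin1 : min 1 μc ≤ 1 := min_le_left _ _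
    have hmin2 : min 1 μc ≤ μc := min_le_right _ _
    nlinarith
  · have hmax1 : (1:ℝ) ≤ max 1 μh := le_max_left _ _
    have hmax2 : μh ≤ max 1 μh := le_max_right _ _
    nlinarith
end

section
/- Let H be a real inner product space, let N ≥ 1 be an integer, and let 0 = t_0 < t_1 < ⋯ < t_N = T be a partition of [0, T]. For n = 1, …, N let w_n : [t_{n−1}, t_n] → H be continuously differentiable, and for 1 ≤ n ≤ N−1 set ⟦w⟧_n := w_n(t_n) − w_{n+1}(t_n). Then Σ_{n=1}^N ∫_{t_{n−1}}^{t_n} ⟨w_n′(t), w_n(t)⟩ dt − Σ_{n=1}^{N−1} ⟨⟦w⟧_n, w_{n+1}(t_n)⟩ + ‖w_1(0)‖² = ½ ( ‖w_N(T)‖² + Σ_{n=1}^{N−1} ‖⟦w⟧_n‖² + ‖w_1(0)‖² ). -/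
open RealInnerProductSpace

private lemma integral_inner_deriv' {H : Type*} [NormedAddCommGroup H] [InnerProductSpace ℝ H]
    {a b : ℝ} (hab : a ≤ b) (w w' : ℝ → H)
    (hw : ∀ s ∈ Set.Icc a b, HasDerivWithinAt w (w' s) (Set.Icc a b) s)
    (hw' : ContinuousOn w' (Set.Icc a b)) :
    ∫ s in a..b, ⟪w' s, w s⟫ = (‖w b‖ ^ 2 - ‖w a‖ ^ 2) / 2 := by
  have hwc : ContinuousOn w (Set.Icc a b) := fun x hx => (hw x hx).continuousWithinAt
  have hF : ∀ x ∈ Set.Icc a b, HasDerivWithinAt (fun s => ⟪w s, w s⟫)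
      (2 * ⟪w' x, w x⟫) (Set.Icc a b) x := by
    intro x hx
    have h := (hw x hx).inner ℝ (hw x hx)
    refine h.congr_deriv ?_
    rw [real_inner_comm (w x) (w' x)]
    ring
  have hcont : ContinuousOn (fun s => ⟪w s, w s⟫) (Set.Icc a b) :=
    fun x hx => (hF x hx).continuousWithinAt
  have hderiv : ∀ x ∈ Set.Ioo a b,
      HasDerivWithinAt (fun s => ⟪w s, w s⟫) (2 * ⟪w' x, w x⟫) (Set.Ioi x) x := by
    intro x hx
    exact (hF x (Set.Ioo_subset_Icc_self hx)).mono_of_mem_nhdsWithin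
      (mem_nhdsWithin_of_mem_nhds (Icc_mem_nhds hx.1 hx.2))
  have hint : IntervalIntegrable (fun x => 2 * ⟪w' x, w x⟫) MeasureTheory.volume a b := by
    apply ContinuousOn.intervalIntegrable
    rw [Set.uIcc_of_le hab]
    exact (continuousOn_const.mul (hw'.inner hwc))
  have key := intervalIntegral.integral_eq_sub_of_hasDeriv_right_of_le hab hcont hderiv hint
  have h2 : ∫ s in a..b, 2 * ⟪w' s, w s⟫ = 2 * ∫ s in a..b, ⟪w' s, w s⟫ :=
    intervalIntegral.integral_const_mul 2 _
  rw [h2] at key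
  rw [real_inner_self_eq_norm_sq, real_inner_self_eq_norm_sq] at key
  linarith

private lemma telescope_sum (A B J : ℕ → ℝ) :
    ∀ N, 1 ≤ N →
      (∑ n ∈ Finset.Icc 1 N, (A n - B n)) -
        (∑ n ∈ Finset.Icc 1 (N - 1), (A n - B (n + 1) - J n)) =
      A N - B 1 + ∑ n ∈ Finset.Icc 1 (N - 1), J n := by
  intro N
  induction N with
  | zero => intro h; omega
  | succ m ih =>
    intro _
    rcases Nat.eq_zero_or_pos m with hm | hm
    · subst hm; simp
    · have h1 : m + 1 - 1 = m := rfl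
      rw [h1]
      rw [Finset.sum_Icc_succ_top (by omega : 1 ≤ m + 1)]
      have h2 : Finset.Icc 1 m = Finset.Icc 1 (m - 1 + 1) := by congr 1; omega
      have h3 : ∑ n ∈ Finset.Icc 1 m, (A n - B (n + 1) - J n)
          = (∑ n ∈ Finset.Icc 1 (m - 1), (A n - B (n + 1) - J n)) + (A m - B (m + 1) - J m) := by
        rw [h2, Finset.sum_Icc_succ_top (by omega : 1 ≤ m - 1 + 1),
          (by omega : m - 1 + 1 = m)]
      have h4 : ∑ n ∈ Finset.Icc 1 m, J n
          = (∑ n ∈ Finset.Icc 1 (m - 1), J n) + J m := by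
        rw [h2, Finset.sum_Icc_succ_top (by omega : 1 ≤ m - 1 + 1),
          (by omega : m - 1 + 1 = m)]
      have := ih hm
      rw [h3, h4]
      linarith

/-- Coercivity identity for the upwind discontinuous Galerkin time-derivative form:
for piecewise `C¹`, `H`-valued functions on a partition `0 = t₀ < ⋯ < t_N = T`,
the upwind DG form of the time derivative tested with the function itself equals
half the sum of the squared final value, squared jumps, and squared initial value. -/
theorem upwind_dg_time_derivative_identity
    {H : Type*} [NormedAddCommGroup H] [InnerProductSpace ℝ H]
    (N : ℕ) (hN : 1 ≤ N) (T : ℝ) (t : ℕ → ℝ)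
    (ht0 : t 0 = 0) (htN : t N = T) (htmono : ∀ n < N, t n < t (n + 1))
    (w w' : ℕ → ℝ → H)
    (hw : ∀ n ∈ Finset.Icc 1 N, ∀ s ∈ Set.Icc (t (n - 1)) (t n),
      HasDerivWithinAt (w n) (w' n s) (Set.Icc (t (n - 1)) (t n)) s)
    (hw' : ∀ n ∈ Finset.Icc 1 N, ContinuousOn (w' n) (Set.Icc (t (n - 1)) (t n))) :
    (∑ n ∈ Finset.Icc 1 N, ∫ s in (t (n - 1))..(t n), ⟪w' n s, w n s⟫)
        - (∑ n ∈ Finset.Icc 1 (N - 1), ⟪w n (t n) - w (n + 1) (t n), w (n + 1) (t n)⟫)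
        + ‖w 1 0‖ ^ 2 =
      (1 / 2) * (‖w N T‖ ^ 2 +
        (∑ n ∈ Finset.Icc 1 (N - 1), ‖w n (t n) - w (n + 1) (t n)‖ ^ 2) + ‖w 1 0‖ ^ 2) := by
  set A : ℕ → ℝ := fun n => ‖w n (t n)‖ ^ 2 with hA
  set B : ℕ → ℝ := fun n => ‖w n (t (n - 1))‖ ^ 2 with hB
  set J : ℕ → ℝ := fun n => ‖w n (t n) - w (n + 1) (t n)‖ ^ 2 with hJ
  -- integrals
  have hint : ∀ n ∈ Finset.Icc 1 N,
      (∫ s in (t (n - 1))..(t n), ⟪w' n s, w n s⟫) = (A n - B n) / 2 := by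
    intro n hn
    simp only [Finset.mem_Icc] at hn
    have hle : t (n - 1) ≤ t n := by
      have := htmono (n - 1) (by omega)
      have h : n - 1 + 1 = n := by omega
      rw [h] at this; linarith
    exact integral_inner_deriv' hle _ _ (hw n (by simp [Finset.mem_Icc]; omega))
      (hw' n (by simp [Finset.mem_Icc]; omega))
  rw [Finset.sum_congr rfl hint]
  -- jump terms
  have hjump : ∀ n ∈ Finset.Icc 1 (N - 1),
      ⟪w n (t n) - w (n + 1) (t n), w (n + 1) (t n)⟫ = (A n - B (n + 1) - J n) / 2 := by
    intro n hn
    have hBn : B (n + 1) = ‖w (n + 1) (t n)‖ ^ 2 := by simp [hB]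
    have := norm_add_sq_real (w n (t n) - w (n + 1) (t n)) (w (n + 1) (t n))
    simp only [sub_add_cancel] at this
    simp only [hA, hJ, hBn]
    linarith
  rw [Finset.sum_congr rfl hjump]
  have hB1 : B 1 = ‖w 1 0‖ ^ 2 := by simp [hB, ht0]
  have hAN : A N = ‖w N T‖ ^ 2 := by simp [hA, htN]
  have hsum2 : (∑ n ∈ Finset.Icc 1 N, (A n - B n) / 2)
      = (∑ n ∈ Finset.Icc 1 N, (A n - B n)) / 2 := by rw [Finset.sum_div]
  have hsum3 : (∑ n ∈ Finset.Icc 1 (N - 1), (A n - B (n + 1) - J n) / 2)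
      = (∑ n ∈ Finset.Icc 1 (N - 1), (A n - B (n + 1) - J n)) / 2 := by rw [Finset.sum_div]
  rw [hsum2, hsum3]
  have htel := telescope_sum A B J N hN
  rw [← hB1, ← hAN]
  linarith
end

section
/- Let H be a real inner product space, let N ≥ 1 be an integer, let 0 = t_0 < t_1 < ⋯ < t_N = T be a partition of [0, T] with T > 0, and let φ_T(t) := T·exp((T−t)/T). For n = 1, …, N let w_n : [t_{n−1}, t_n] → H be continuously differentiable, and for 1 ≤ n ≤ N−1 set ⟦w⟧_n := w_n(t_n) − w_{n+1}(t_n). Then Σ_{n=1}^N ∫_{t_{n−1}}^{t_n} φ_T(t)·⟨w_n′(t), w_n(t)⟩ dt − Σ_{n=1}^{N−1} φ_T(t_n)·⟨⟦w⟧_n, w_{n+1}(t_n)⟩ + φ_T(0)·‖w_1(0)‖² ≥ ½ Σ_{n=1}^N ∫_{t_{n−1}}^{t_n} ‖w_n(t)‖² dt + (T/2) ( ‖w_N(T)‖² + Σ_{n=1}^{N−1} ‖⟦w⟧_n‖² + ‖w_1(0)‖² ). -/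
open RealInnerProductSpace

lemma tele_aux (A B : ℕ → ℝ) (N : ℕ) (hN : 1 ≤ N) :
    (∑ n ∈ Finset.Icc 1 N, (A n - B n)) + (∑ n ∈ Finset.Icc 1 (N - 1), (B (n + 1) - A n))
      = A N - B 1 := by
  induction N, hN using Nat.le_induction with
  | base => simp
  | succ k hk ih =>
    have h2 : (∑ n ∈ Finset.Icc 1 k, (B (n + 1) - A n))
        = (∑ n ∈ Finset.Icc 1 (k - 1), (B (n + 1) - A n)) + (B (k + 1) - A k) := by
      conv_lhs => rw [show k = k - 1 + 1 from (Nat.sub_add_cancel hk).symm]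
      rw [Finset.sum_Icc_succ_top (by omega : 1 ≤ k - 1 + 1), Nat.sub_add_cancel hk]
    rw [Finset.sum_Icc_succ_top (by omega : 1 ≤ k + 1), show k + 1 - 1 = k from rfl, h2]
    linarith [ih]

/-- Weighted lower bound for the upwind discontinuous Galerkin time-derivative form,
with the exponential weight `φ_T(t) = T exp((T-t)/T)`: it controls the full
`L²(0,T)`-in-time norm plus `T/2` times the squared jumps and endpoint values. -/
theorem upwind_dg_time_derivative_weighted_bound
    {H : Type*} [NormedAddCommGroup H] [InnerProductSpace ℝ H]
    (N : ℕ) (hN : 1 ≤ N) (T : ℝ) (hT : 0 < T) (t : ℕ → ℝ)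
    (ht0 : t 0 = 0) (htN : t N = T) (htmono : ∀ n < N, t n < t (n + 1))
    (w w' : ℕ → ℝ → H)
    (hw : ∀ n ∈ Finset.Icc 1 N, ∀ s ∈ Set.Icc (t (n - 1)) (t n),
      HasDerivWithinAt (w n) (w' n s) (Set.Icc (t (n - 1)) (t n)) s)
    (hw' : ∀ n ∈ Finset.Icc 1 N, ContinuousOn (w' n) (Set.Icc (t (n - 1)) (t n))) :
    (∑ n ∈ Finset.Icc 1 N,
        ∫ s in (t (n - 1))..(t n), T * Real.exp ((T - s) / T) * ⟪w' n s, w n s⟫)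
        - (∑ n ∈ Finset.Icc 1 (N - 1),
            T * Real.exp ((T - t n) / T) * ⟪w n (t n) - w (n + 1) (t n), w (n + 1) (t n)⟫)
        + T * Real.exp ((T - 0) / T) * ‖w 1 0‖ ^ 2 ≥
      (1 / 2) * (∑ n ∈ Finset.Icc 1 N, ∫ s in (t (n - 1))..(t n), ‖w n s‖ ^ 2)
        + (T / 2) * (‖w N T‖ ^ 2 +
            (∑ n ∈ Finset.Icc 1 (N - 1), ‖w n (t n) - w (n + 1) (t n)‖ ^ 2) +
            ‖w 1 0‖ ^ 2) := by
  -- monotonicity of the partition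
  have hmono : ∀ m n : ℕ, m ≤ n → n ≤ N → t m ≤ t n := by
    intro m n hmn hnN
    induction n with
    | zero => simp [Nat.le_zero.mp hmn]
    | succ k ih =>
      rcases Nat.eq_or_lt_of_le hmn with h | h
      · rw [h]
      · exact le_trans (ih (Nat.lt_succ_iff.mp h) (by omega))
          (le_of_lt (htmono k (by omega)))
  have htle : ∀ n, n ≤ N → t n ≤ T := fun n hn => htN ▸ hmono n N hn le_rfl
  -- per-interval lower bound via FTC
  have key : ∀ n ∈ Finset.Icc 1 N,
      (T * Real.exp ((T - t n) / T) / 2 * ‖w n (t n)‖ ^ 2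
          - T * Real.exp ((T - t (n - 1)) / T) / 2 * ‖w n (t (n - 1))‖ ^ 2)
        + (1 / 2) * ∫ s in (t (n - 1))..(t n), ‖w n s‖ ^ 2
      ≤ ∫ s in (t (n - 1))..(t n), T * Real.exp ((T - s) / T) * ⟪w' n s, w n s⟫ := by
    intro n hn
    have hn' := Finset.mem_Icc.mp hn
    have hab : t (n - 1) ≤ t n := by
      have h := htmono (n - 1) (by omega)
      rw [Nat.sub_add_cancel hn'.1] at h
      exact h.le
    have hwc : ContinuousOn (w n) (Set.Icc (t (n - 1)) (t n)) :=
      fun s hs => (hw n hn s hs).continuousWithinAt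
    have hw'c := hw' n hn
    -- the derivative of the weighted square
    have hFd : ∀ s ∈ Set.Icc (t (n - 1)) (t n),
        HasDerivWithinAt (fun s => T * Real.exp ((T - s) / T) / 2 * ‖w n s‖ ^ 2)
          (T * Real.exp ((T - s) / T) * ⟪w' n s, w n s⟫
            - Real.exp ((T - s) / T) / 2 * ‖w n s‖ ^ 2)
          (Set.Icc (t (n - 1)) (t n)) s := by
      intro s hs
      have h1 : HasDerivWithinAt (fun y => (⟪w n y, w n y⟫ : ℝ))
          (⟪w n s, w' n s⟫ + ⟪w' n s, w n s⟫) (Set.Icc (t (n - 1)) (t n)) s :=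
        (hw n hn s hs).inner ℝ (hw n hn s hs)
      have h1' : HasDerivWithinAt (fun y => ‖w n y‖ ^ 2)
          (2 * ⟪w' n s, w n s⟫) (Set.Icc (t (n - 1)) (t n)) s := by
        have h2 := h1.congr (fun y _ => (real_inner_self_eq_norm_sq (w n y)).symm)
          ((real_inner_self_eq_norm_sq (w n s)).symm)
        refine h2.congr_deriv ?_
        rw [real_inner_comm (w n s) (w' n s)]; ring
      have hc : HasDerivAt (fun y : ℝ => T * Real.exp ((T - y) / T) / 2)
          (-(Real.exp ((T - s) / T) / 2)) s := by
        have h3 := ((((hasDerivAt_id s).const_sub T).div_const T).exp.const_mul T).div_const 2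
        refine h3.congr_deriv ?_
        field_simp
        rfl
      have hprod := hc.hasDerivWithinAt.mul h1'
      refine hprod.congr_deriv ?_
      ring
    have hFcont : ContinuousOn (fun s => T * Real.exp ((T - s) / T) / 2 * ‖w n s‖ ^ 2)
        (Set.Icc (t (n - 1)) (t n)) := fun s hs => (hFd s hs).continuousWithinAt
    have hecont : Continuous (fun s : ℝ => Real.exp ((T - s) / T)) := by continuity
    have hintF' : IntervalIntegrable
        (fun s => T * Real.exp ((T - s) / T) * ⟪w' n s, w n s⟫
          - Real.exp ((T - s) / T) / 2 * ‖w n s‖ ^ 2)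
        MeasureTheory.volume (t (n - 1)) (t n) := by
      apply ContinuousOn.intervalIntegrable
      rw [Set.uIcc_of_le hab]
      exact (((continuous_const.mul hecont).continuousOn.mul (hw'c.inner hwc)).sub
        ((hecont.div_const 2).continuousOn.mul ((hwc.norm).pow 2)))
    have hintsq : IntervalIntegrable (fun s => ‖w n s‖ ^ 2)
        MeasureTheory.volume (t (n - 1)) (t n) := by
      apply ContinuousOn.intervalIntegrable
      rw [Set.uIcc_of_le hab]
      exact (hwc.norm).pow 2
    have hinte : IntervalIntegrable (fun s => Real.exp ((T - s) / T) / 2 * ‖w n s‖ ^ 2)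
        MeasureTheory.volume (t (n - 1)) (t n) := by
      apply ContinuousOn.intervalIntegrable
      rw [Set.uIcc_of_le hab]
      exact (hecont.div_const 2).continuousOn.mul ((hwc.norm).pow 2)
    have hFTC : (∫ s in (t (n - 1))..(t n),
        (T * Real.exp ((T - s) / T) * ⟪w' n s, w n s⟫
          - Real.exp ((T - s) / T) / 2 * ‖w n s‖ ^ 2))
        = T * Real.exp ((T - t n) / T) / 2 * ‖w n (t n)‖ ^ 2
          - T * Real.exp ((T - t (n - 1)) / T) / 2 * ‖w n (t (n - 1))‖ ^ 2 :=
      intervalIntegral.integral_eq_sub_of_hasDeriv_right_of_le hab hFcont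
        (fun x hx => ((hFd x (Set.Ioo_subset_Icc_self hx)).hasDerivAt
          (Icc_mem_nhds hx.1 hx.2)).hasDerivWithinAt) hintF'
    have hsplit : (∫ s in (t (n - 1))..(t n), T * Real.exp ((T - s) / T) * ⟪w' n s, w n s⟫)
        = (T * Real.exp ((T - t n) / T) / 2 * ‖w n (t n)‖ ^ 2
            - T * Real.exp ((T - t (n - 1)) / T) / 2 * ‖w n (t (n - 1))‖ ^ 2)
          + ∫ s in (t (n - 1))..(t n), Real.exp ((T - s) / T) / 2 * ‖w n s‖ ^ 2 := by
      rw [← hFTC, ← intervalIntegral.integral_add hintF' hinte]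
      congr 1
      funext s
      ring
    have hbound : (1 / 2) * (∫ s in (t (n - 1))..(t n), ‖w n s‖ ^ 2)
        ≤ ∫ s in (t (n - 1))..(t n), Real.exp ((T - s) / T) / 2 * ‖w n s‖ ^ 2 := by
      rw [← intervalIntegral.integral_const_mul]
      apply intervalIntegral.integral_mono_on hab (hintsq.const_mul _) hinte
      intro s hs
      have hsT : s ≤ T := le_trans hs.2 (htle n hn'.2)
      have hexp : 1 ≤ Real.exp ((T - s) / T) :=
        Real.one_le_exp (div_nonneg (by linarith) hT.le)
      nlinarith [sq_nonneg ‖w n s‖]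
    rw [hsplit]
    linarith
  -- sum the per-interval bounds
  have hsum : (∑ n ∈ Finset.Icc 1 N,
        (T * Real.exp ((T - t n) / T) / 2 * ‖w n (t n)‖ ^ 2
          - T * Real.exp ((T - t (n - 1)) / T) / 2 * ‖w n (t (n - 1))‖ ^ 2))
      + (1 / 2) * (∑ n ∈ Finset.Icc 1 N, ∫ s in (t (n - 1))..(t n), ‖w n s‖ ^ 2)
      ≤ ∑ n ∈ Finset.Icc 1 N,
          ∫ s in (t (n - 1))..(t n), T * Real.exp ((T - s) / T) * ⟪w' n s, w n s⟫ := by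
    have h := Finset.sum_le_sum key
    rwa [Finset.sum_add_distrib, ← Finset.mul_sum] at h
  -- jump identity
  have hJ : (∑ n ∈ Finset.Icc 1 (N - 1),
        T * Real.exp ((T - t n) / T) * ⟪w n (t n) - w (n + 1) (t n), w (n + 1) (t n)⟫)
      = -(∑ n ∈ Finset.Icc 1 (N - 1),
            (T * Real.exp ((T - t n) / T) / 2 * ‖w (n + 1) (t n)‖ ^ 2
              - T * Real.exp ((T - t n) / T) / 2 * ‖w n (t n)‖ ^ 2))
        - ∑ n ∈ Finset.Icc 1 (N - 1),
            T * Real.exp ((T - t n) / T) / 2 * ‖w n (t n) - w (n + 1) (t n)‖ ^ 2 := by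
    rw [← Finset.sum_neg_distrib, ← Finset.sum_sub_distrib]
    apply Finset.sum_congr rfl
    intro n _
    have h1 : (⟪w n (t n) - w (n + 1) (t n), w (n + 1) (t n)⟫ : ℝ)
        = ⟪w n (t n), w (n + 1) (t n)⟫ - ‖w (n + 1) (t n)‖ ^ 2 := by
      rw [inner_sub_left, real_inner_self_eq_norm_sq]
    have h2 := norm_sub_sq_real (w n (t n)) (w (n + 1) (t n))
    rw [h1, h2]
    ring
  -- telescoping
  have htel := tele_aux
    (fun n => T * Real.exp ((T - t n) / T) / 2 * ‖w n (t n)‖ ^ 2)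
    (fun n => T * Real.exp ((T - t (n - 1)) / T) / 2 * ‖w n (t (n - 1))‖ ^ 2) N hN
  simp only [Nat.add_sub_cancel, Nat.sub_self] at htel
  -- jump sum lower bound
  have hQ : (T / 2) * (∑ n ∈ Finset.Icc 1 (N - 1), ‖w n (t n) - w (n + 1) (t n)‖ ^ 2)
      ≤ ∑ n ∈ Finset.Icc 1 (N - 1),
          T * Real.exp ((T - t n) / T) / 2 * ‖w n (t n) - w (n + 1) (t n)‖ ^ 2 := by
    rw [Finset.mul_sum]
    apply Finset.sum_le_sum
    intro n hn
    have hn' := Finset.mem_Icc.mp hn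
    have hsT : t n ≤ T := htle n (by omega)
    have hexp : 1 ≤ Real.exp ((T - t n) / T) :=
      Real.one_le_exp (div_nonneg (by linarith) hT.le)
    exact mul_le_mul_of_nonneg_right (by nlinarith) (sq_nonneg _)
  -- endpoint values
  have hE : (T - 0) / T = 1 := by rw [sub_zero, div_self hT.ne']
  have hAN : T * Real.exp ((T - t N) / T) / 2 * ‖w N (t N)‖ ^ 2 = T / 2 * ‖w N T‖ ^ 2 := by
    rw [htN, sub_self, zero_div, Real.exp_zero]; ring
  have hB1 : T * Real.exp ((T - t 0) / T) / 2 * ‖w 1 (t 0)‖ ^ 2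
      = T * Real.exp 1 / 2 * ‖w 1 0‖ ^ 2 := by rw [ht0, hE]
  rw [ge_iff_le, hE]
  rw [hAN, hB1] at htel
  have he1 : (1 : ℝ) ≤ Real.exp 1 := Real.one_le_exp zero_le_one
  have hW : (0 : ℝ) ≤ ‖w 1 0‖ ^ 2 := sq_nonneg _
  have hTe : T / 2 * ‖w 1 0‖ ^ 2 ≤ T * Real.exp 1 / 2 * ‖w 1 0‖ ^ 2 :=
    mul_le_mul_of_nonneg_right (by nlinarith) hW
  linarith
end

section
/- Let V be a finite-dimensional real vector space with basis (e_1, …, e_M), let K be a real inner product space, let G : V → K be linear, and let a : V × V → ℝ be a bilinear form such that a(v, v) ≥ α_*·‖G v‖² for all v ∈ V, where α_* > 0. Let T > 0, let 0 = t_0 < ⋯ < t_N = T be a partition, let r ≥ 0 be an integer, and let u be given on each subinterval (t_{n−1}, t_n) by u(t) = Σ_ℓ α_ℓ^{(n)}(t)·e_ℓ with each α_ℓ^{(n)} a real polynomial of degree at most r. On each subinterval define Π(φ_T u)(t) := Σ_ℓ q_ℓ^{(n)}(t)·e_ℓ, where q_ℓ^{(n)} is a polynomial of degree at most r satisfying ∫_{t_{n−1}}^{t_n}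 (φ_T(t)·α_ℓ^{(n)}(t) − q_ℓ^{(n)}(t))·p(t) dt = 0 for every polynomial p of degree at most r. For θ > 0 and ν ≥ 0 set v := Π(φ_T u) + θ·u on each subinterval. Then ν Σ_{n=1}^N ∫_{t_{n−1}}^{t_n} a(u(t), v(t)) dt ≥ ν α_* (T + θ) Σ_{n=1}^N ∫_{t_{n−1}}^{t_n} ‖G u(t)‖² dt. -/
set_option maxHeartbeats 2000000


/-- Abstract lower bound for the diffusion term tested with the nonstandard test
function `v = Π_r(φ_T u) + θ u`, where `Π_r` is the componentwise time-slab-wise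
`L²`-orthogonal projection onto polynomials of degree at most `r` and
`φ_T(t) = T exp((T-t)/T)`. -/
theorem diffusion_term_lower_bound
    {V K : Type*} [AddCommGroup V] [Module ℝ V] [FiniteDimensional ℝ V]
    [NormedAddCommGroup K] [InnerProductSpace ℝ K]
    (M : ℕ) (e : Module.Basis (Fin M) ℝ V) (G : V →ₗ[ℝ] K)
    (a : V →ₗ[ℝ] V →ₗ[ℝ] ℝ) (αs : ℝ) (hαs : 0 < αs)
    (ha : ∀ v : V, αs * ‖G v‖ ^ 2 ≤ a v v)
    (T : ℝ) (hT : 0 < T) (N : ℕ) (hN : 1 ≤ N) (t : ℕ → ℝ)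
    (ht0 : t 0 = 0) (htN : t N = T) (htmono : ∀ n < N, t n < t (n + 1))
    (r : ℕ) (α q : ℕ → Fin M → Polynomial ℝ)
    (hα : ∀ n ℓ, (α n ℓ).natDegree ≤ r) (hq : ∀ n ℓ, (q n ℓ).natDegree ≤ r)
    (horth : ∀ n ∈ Finset.Icc 1 N, ∀ ℓ : Fin M, ∀ p : Polynomial ℝ, p.natDegree ≤ r →
      (∫ s in (t (n - 1))..(t n),
        (T * Real.exp ((T - s) / T) * (α n ℓ).eval s - (q n ℓ).eval s) * p.eval s) = 0)
    (θ ν : ℝ) (hθ : 0 < θ) (hν : 0 ≤ ν) :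
    ν * αs * (T + θ) *
        (∑ n ∈ Finset.Icc 1 N,
          ∫ s in (t (n - 1))..(t n), ‖G (∑ ℓ, (α n ℓ).eval s • e ℓ)‖ ^ 2) ≤
      ν * ∑ n ∈ Finset.Icc 1 N,
        ∫ s in (t (n - 1))..(t n),
          a (∑ ℓ, (α n ℓ).eval s • e ℓ)
            ((∑ ℓ, (q n ℓ).eval s • e ℓ) + θ • ∑ ℓ, (α n ℓ).eval s • e ℓ) := by
  set φ : ℝ → ℝ := fun s => T * Real.exp ((T - s) / T) with hφ
  have hφc : Continuous φ := by
    simp only [hφ]; fun_prop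
  -- monotonicity of the partition
  have hmono : ∀ j, j ≤ N → ∀ i, i ≤ j → t i ≤ t j := by
    intro j
    induction j with
    | zero => intro _ i hi; interval_cases i; exact le_rfl
    | succ m ih =>
      intro hj i hi
      rcases Nat.lt_succ_iff_lt_or_eq.mp (Nat.lt_succ_of_le hi) with h | h
      · exact le_trans (ih (by omega) i (by omega)) (le_of_lt (htmono m (by omega)))
      · subst h; exact le_rfl
  -- per-slab inequality
  have key : ∀ n ∈ Finset.Icc 1 N,
      αs * (T + θ) *
        (∫ s in (t (n - 1))..(t n), ‖G (∑ ℓ, (α n ℓ).eval s • e ℓ)‖ ^ 2) ≤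
      ∫ s in (t (n - 1))..(t n),
        a (∑ ℓ, (α n ℓ).eval s • e ℓ)
          ((∑ ℓ, (q n ℓ).eval s • e ℓ) + θ • ∑ ℓ, (α n ℓ).eval s • e ℓ) := by
    intro n hn
    simp only [Finset.mem_Icc] at hn
    have hab : t (n - 1) ≤ t n := by
      have := htmono (n - 1) (by omega)
      rw [Nat.sub_add_cancel hn.1] at this
      exact this.le
    have h0a : (0 : ℝ) ≤ t (n - 1) := by
      rw [← ht0]; exact hmono (n - 1) (by omega) 0 (by omega)
    have hbT : t n ≤ T := by
      rw [← htN]; exact hmono N le_rfl n hn.2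
    -- F s = a (u s) (u s) in coordinates
    set F : ℝ → ℝ := fun s => ∑ k, ∑ ℓ,
      (α n k).eval s * (α n ℓ).eval s * a (e k) (e ℓ) with hF
    have hFa : ∀ s : ℝ,
        a (∑ ℓ, (α n ℓ).eval s • e ℓ) (∑ ℓ, (α n ℓ).eval s • e ℓ) = F s := by
      intro s
      simp only [hF, map_sum, map_smul, LinearMap.coe_sum, Finset.sum_apply,
        LinearMap.smul_apply, smul_eq_mul, Finset.mul_sum]
      rw [Finset.sum_comm]
      exact Finset.sum_congr rfl fun k _ => Finset.sum_congr rfl fun ℓ _ => by ring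
    -- expand the main integrand
    have hexp : ∀ s : ℝ,
        a (∑ ℓ, (α n ℓ).eval s • e ℓ)
          ((∑ ℓ, (q n ℓ).eval s • e ℓ) + θ • ∑ ℓ, (α n ℓ).eval s • e ℓ)
        = ∑ k, ∑ ℓ,
            ((q n ℓ).eval s * (α n k).eval s * a (e k) (e ℓ)
              + θ * ((α n ℓ).eval s * (α n k).eval s * a (e k) (e ℓ))) := by
      intro s
      simp only [map_add, map_sum, map_smul, LinearMap.coe_sum, Finset.sum_apply,
        LinearMap.smul_apply, LinearMap.add_apply, smul_eq_mul, Finset.mul_sum,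
        ← Finset.sum_add_distrib]
      rw [Finset.sum_comm]
      exact Finset.sum_congr rfl fun k _ => Finset.sum_congr rfl fun ℓ _ => by ring
    -- integrability helpers
    have hcont : ∀ p p' : Polynomial ℝ, ∀ c : ℝ,
        IntervalIntegrable (fun s => p.eval s * p'.eval s * c) MeasureTheory.volume
          (t (n - 1)) (t n) := by
      intro p p' c
      exact (((p.continuous_aeval).mul (p'.continuous_aeval)).mul
        continuous_const).intervalIntegrable _ _
    have hcontφ : ∀ p p' : Polynomial ℝ, ∀ c : ℝ,
        IntervalIntegrable (fun s => φ s * p.eval s * p'.eval s * c) MeasureTheory.volume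
          (t (n - 1)) (t n) := by
      intro p p' c
      exact (((hφc.mul (p.continuous_aeval)).mul (p'.continuous_aeval)).mul
        continuous_const).intervalIntegrable _ _
    have hint1 : ∀ k ℓ : Fin M,
        IntervalIntegrable (fun s =>
          (q n ℓ).eval s * (α n k).eval s * a (e k) (e ℓ)
            + θ * ((α n ℓ).eval s * (α n k).eval s * a (e k) (e ℓ)))
          MeasureTheory.volume (t (n - 1)) (t n) :=
      fun k ℓ => (hcont _ _ _).add ((hcont _ _ _).const_mul θ)
    have hc1 : ∀ k : Fin M, Continuous (fun s => ∑ ℓ,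
        ((q n ℓ).eval s * (α n k).eval s * a (e k) (e ℓ)
          + θ * ((α n ℓ).eval s * (α n k).eval s * a (e k) (e ℓ)))) := by
      intro k
      exact continuous_finset_sum _ fun ℓ _ =>
        ((((q n ℓ).continuous.mul (α n k).continuous).mul continuous_const).add
          (continuous_const.mul (((α n ℓ).continuous.mul (α n k).continuous).mul
            continuous_const)))
    have hc2 : ∀ k : Fin M, Continuous (fun s => ∑ ℓ,
        (φ s + θ) * ((α n k).eval s * (α n ℓ).eval s * a (e k) (e ℓ))) := by
      intro k
      exact continuous_finset_sum _ fun ℓ _ =>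
        (hφc.add continuous_const).mul
          (((α n k).continuous.mul (α n ℓ).continuous).mul continuous_const)
    have hint2 : ∀ k ℓ : Fin M,
        IntervalIntegrable (fun s =>
          (φ s + θ) * ((α n k).eval s * (α n ℓ).eval s * a (e k) (e ℓ)))
          MeasureTheory.volume (t (n - 1)) (t n) := by
      intro k ℓ
      exact ((hφc.add continuous_const).mul
        ((((α n k).continuous_aeval).mul ((α n ℓ).continuous_aeval)).mul
          continuous_const)).intervalIntegrable _ _
    -- orthogonality in usable form
    have horth' : ∀ ℓ k : Fin M,
        (∫ s in (t (n - 1))..(t n), (q n ℓ).eval s * (α n k).eval s)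
        = ∫ s in (t (n - 1))..(t n), φ s * (α n ℓ).eval s * (α n k).eval s := by
      intro ℓ k
      have h := horth n (Finset.mem_Icc.mpr hn) ℓ (α n k) (hα n k)
      have hsub : (∫ s in (t (n - 1))..(t n),
          (φ s * (α n ℓ).eval s * (α n k).eval s - (q n ℓ).eval s * (α n k).eval s)) = 0 := by
        rw [← h]
        congr 1 with s
        simp only [hφ]
        ring
      rw [intervalIntegral.integral_sub
        (by simpa using hcontφ (α n ℓ) (α n k) 1)
        (by simpa using hcont (q n ℓ) (α n k) 1)] at hsub
      linarith
    -- compute the main integral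
    have hmain : (∫ s in (t (n - 1))..(t n),
        a (∑ ℓ, (α n ℓ).eval s • e ℓ)
          ((∑ ℓ, (q n ℓ).eval s • e ℓ) + θ • ∑ ℓ, (α n ℓ).eval s • e ℓ))
        = ∫ s in (t (n - 1))..(t n), (φ s + θ) * F s := by
      calc (∫ s in (t (n - 1))..(t n),
          a (∑ ℓ, (α n ℓ).eval s • e ℓ)
            ((∑ ℓ, (q n ℓ).eval s • e ℓ) + θ • ∑ ℓ, (α n ℓ).eval s • e ℓ))
          = ∫ s in (t (n - 1))..(t n), ∑ k, ∑ ℓ,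
              ((q n ℓ).eval s * (α n k).eval s * a (e k) (e ℓ)
                + θ * ((α n ℓ).eval s * (α n k).eval s * a (e k) (e ℓ))) := by
            simp only [hexp]
        _ = ∑ k, ∫ s in (t (n - 1))..(t n), ∑ ℓ,
              ((q n ℓ).eval s * (α n k).eval s * a (e k) (e ℓ)
                + θ * ((α n ℓ).eval s * (α n k).eval s * a (e k) (e ℓ))) := by
            apply intervalIntegral.integral_finset_sum
            intro k _
            exact (hc1 k).intervalIntegrable _ _
        _ = ∑ k, ∑ ℓ, ∫ s in (t (n - 1))..(t n),
              ((q n ℓ).eval s * (α n k).eval s * a (e k) (e ℓ)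
                + θ * ((α n ℓ).eval s * (α n k).eval s * a (e k) (e ℓ))) := by
            refine Finset.sum_congr rfl fun k _ => ?_
            apply intervalIntegral.integral_finset_sum
            intro ℓ _
            exact hint1 k ℓ
        _ = ∑ k, ∑ ℓ, ∫ s in (t (n - 1))..(t n),
              (φ s + θ) * ((α n k).eval s * (α n ℓ).eval s * a (e k) (e ℓ)) := by
            refine Finset.sum_congr rfl fun k _ => Finset.sum_congr rfl fun ℓ _ => ?_
            rw [intervalIntegral.integral_add (hcont _ _ _) ((hcont _ _ _).const_mul θ)]
            have hrhs : (∫ s in (t (n - 1))..(t n),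
                (φ s + θ) * ((α n k).eval s * (α n ℓ).eval s * a (e k) (e ℓ)))
                = ∫ s in (t (n - 1))..(t n),
                  (φ s * (α n ℓ).eval s * (α n k).eval s * a (e k) (e ℓ)
                    + θ * ((α n ℓ).eval s * (α n k).eval s * a (e k) (e ℓ))) := by
              congr 1 with s; ring
            rw [hrhs, intervalIntegral.integral_add (hcontφ _ _ _)
              ((hcont _ _ _).const_mul θ)]
            congr 1
            have h1 : (∫ s in (t (n - 1))..(t n),
                (q n ℓ).eval s * (α n k).eval s * a (e k) (e ℓ))
                = (∫ s in (t (n - 1))..(t n), (q n ℓ).eval s * (α n k).eval s)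
                    * a (e k) (e ℓ) :=
              intervalIntegral.integral_mul_const _ _
            have h2 : (∫ s in (t (n - 1))..(t n),
                φ s * (α n ℓ).eval s * (α n k).eval s * a (e k) (e ℓ))
                = (∫ s in (t (n - 1))..(t n), φ s * (α n ℓ).eval s * (α n k).eval s)
                    * a (e k) (e ℓ) :=
              intervalIntegral.integral_mul_const _ _
            rw [h1, h2, horth']
        _ = ∫ s in (t (n - 1))..(t n), (φ s + θ) * F s := by
            have hFeq : ∀ s : ℝ, (φ s + θ) * F s
                = ∑ k, ∑ ℓ, (φ s + θ) * ((α n k).eval s * (α n ℓ).eval s * a (e k) (e ℓ)) := by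
              intro s
              simp only [hF, Finset.mul_sum]
            simp only [hFeq]
            refine Eq.symm ?_
            calc (∫ s in (t (n - 1))..(t n), ∑ k, ∑ ℓ,
                  (φ s + θ) * ((α n k).eval s * (α n ℓ).eval s * a (e k) (e ℓ)))
                = ∑ k, ∫ s in (t (n - 1))..(t n), ∑ ℓ,
                    (φ s + θ) * ((α n k).eval s * (α n ℓ).eval s * a (e k) (e ℓ)) :=
                by
                  apply intervalIntegral.integral_finset_sum
                  intro k _
                  exact (hc2 k).intervalIntegrable _ _
              _ = ∑ k, ∑ ℓ, ∫ s in (t (n - 1))..(t n),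
                    (φ s + θ) * ((α n k).eval s * (α n ℓ).eval s * a (e k) (e ℓ)) := by
                refine Finset.sum_congr rfl fun k _ => ?_
                apply intervalIntegral.integral_finset_sum
                intro ℓ _
                exact hint2 k ℓ
    rw [hmain]
    -- integrability of the two sides
    have hGeq : (fun s : ℝ => ‖G (∑ ℓ, (α n ℓ).eval s • e ℓ)‖ ^ 2)
        = fun s : ℝ => ‖∑ ℓ, (α n ℓ).eval s • G (e ℓ)‖ ^ 2 := by
      funext s; simp only [map_sum, map_smul]
    have hGint : IntervalIntegrable
        (fun s : ℝ => ‖G (∑ ℓ, (α n ℓ).eval s • e ℓ)‖ ^ 2)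
        MeasureTheory.volume (t (n - 1)) (t n) := by
      rw [hGeq]
      exact (((continuous_finset_sum _ fun ℓ _ =>
        ((α n ℓ).continuous_aeval).smul continuous_const).norm).pow 2).intervalIntegrable _ _
    have hFc : Continuous F := by
      simp only [hF]
      exact continuous_finset_sum _ fun k _ => continuous_finset_sum _ fun ℓ _ =>
        (((α n k).continuous_aeval).mul ((α n ℓ).continuous_aeval)).mul continuous_const
    have hFint : IntervalIntegrable (fun s => (φ s + θ) * F s)
        MeasureTheory.volume (t (n - 1)) (t n) :=
      ((hφc.add continuous_const).mul hFc).intervalIntegrable _ _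
    rw [← intervalIntegral.integral_const_mul]
    apply intervalIntegral.integral_mono_on hab (hGint.const_mul _) hFint
    intro s hs
    have hsT : s ≤ T := le_trans hs.2 hbT
    have hφT : T ≤ φ s := by
      have : (1 : ℝ) ≤ Real.exp ((T - s) / T) := by
        apply Real.one_le_exp
        have : 0 ≤ T - s := by linarith
        positivity
      calc T = T * 1 := (mul_one T).symm
        _ ≤ T * Real.exp ((T - s) / T) := by
            exact mul_le_mul_of_nonneg_left this hT.le
        _ = φ s := rfl
    have h1 : αs * ‖G (∑ ℓ, (α n ℓ).eval s • e ℓ)‖ ^ 2 ≤ F s := by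
      rw [← hFa s]; exact ha _
    have h2 : (0 : ℝ) ≤ ‖G (∑ ℓ, (α n ℓ).eval s • e ℓ)‖ ^ 2 := by positivity
    have h3 : (φ s + θ) * (αs * ‖G (∑ ℓ, (α n ℓ).eval s • e ℓ)‖ ^ 2) ≤ (φ s + θ) * F s :=
      mul_le_mul_of_nonneg_left h1 (by linarith)
    have h4 : (T + θ) * (αs * ‖G (∑ ℓ, (α n ℓ).eval s • e ℓ)‖ ^ 2)
        ≤ (φ s + θ) * (αs * ‖G (∑ ℓ, (α n ℓ).eval s • e ℓ)‖ ^ 2) :=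
      mul_le_mul_of_nonneg_right (by linarith) (mul_nonneg hαs.le h2)
    nlinarith [h3, h4]
  calc ν * αs * (T + θ) *
        (∑ n ∈ Finset.Icc 1 N,
          ∫ s in (t (n - 1))..(t n), ‖G (∑ ℓ, (α n ℓ).eval s • e ℓ)‖ ^ 2)
      = ν * ∑ n ∈ Finset.Icc 1 N, (αs * (T + θ) *
          ∫ s in (t (n - 1))..(t n), ‖G (∑ ℓ, (α n ℓ).eval s • e ℓ)‖ ^ 2) := by
        rw [Finset.mul_sum, Finset.mul_sum]
        exact Finset.sum_congr rfl fun n _ => by ring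
    _ ≤ ν * ∑ n ∈ Finset.Icc 1 N,
        ∫ s in (t (n - 1))..(t n),
          a (∑ ℓ, (α n ℓ).eval s • e ℓ)
            ((∑ ℓ, (q n ℓ).eval s • e ℓ) + θ • ∑ ℓ, (α n ℓ).eval s • e ℓ) :=
      mul_le_mul_of_nonneg_left (Finset.sum_le_sum key) hν
end

section
/- For every integer r ≥ 0 there exists a constant C > 0, depending only on r, with the following property. Let H be a finite-dimensional real inner product space, let m : H × H → ℝ be a symmetric bilinear form, and let 0 < μ_* ≤ μ^* satisfy μ_*‖v‖² ≤ m(v, v) ≤ μ^*‖v‖² for all v ∈ H. Let T > 0 and 0 = t_0 < ⋯ < t_N = T with τ := max_n (t_n − t_{n−1}). Fix an orthonormal basis (e_1, …, e_M) of H and let u be given on each closed subinterval [t_{n−1}, t_n] by u_n(t) = Σ_ℓ α_ℓ^{(n)}(t)·e_ℓ with each α_ℓ^{(n)} a polynomial of degree at most r. On each subinterval define Π(φ_T u)_n(t) := Σ_ℓ q_ℓ^{(n)}(t)·e_ℓ, where q_ℓ^{(n)} is the polynomial of degree at most r with ∫_{t_{n−1}}^{t_n} (φ_T·α_ℓ^{(n)}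 − q_ℓ^{(n)})·p dt = 0 for all polynomials p of degree at most r. For θ > 0 set v_n := Π(φ_T u)_n + θ·u_n. Define m^{∂t}(u, v) := Σ_{n=1}^N ∫_{t_{n−1}}^{t_n} m(u_n′(t), v_n(t)) dt − Σ_{n=1}^{N−1} m(u_n(t_n) − u_{n+1}(t_n), v_{n+1}(t_n)) + m(u_1(0), v_1(0)), and |u|_J² := ½ ( ‖u_N(T)‖² + Σ_{n=1}^{N−1} ‖u_n(t_n) − u_{n+1}(t_n)‖² + ‖u_1(0)‖² ). Then m^{∂t}(u, v) ≥ μ_* ( (½ − (μ^*/μ_*)²·C·τ/(2θ)) Σ_{n=1}^N ∫_{t_{n−1}}^{t_n} ‖u_n(t)‖² dt + T·|u|_J² ). -/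
open MeasureTheory Polynomial

noncomputable def Qf (r : ℕ) (c : EuclideanSpace ℝ (Fin (r+1))) : ℝ :=
  ∫ x in (0:ℝ)..1, (∑ i, c i * x ^ (i:ℕ))^2

lemma Qf_eq (r : ℕ) (c : EuclideanSpace ℝ (Fin (r+1))) :
    Qf r c = ∑ i, ∑ j, c i * c j * (1/((i:ℝ)+(j:ℝ)+1)) := by
  unfold Qf
  have h : ∀ x : ℝ, (∑ i, c i * x ^ (i:ℕ))^2
      = ∑ i, ∑ j, (c i * c j) * x ^ ((i:ℕ)+(j:ℕ)) := by
    intro x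
    rw [pow_two, Finset.sum_mul_sum]
    refine Finset.sum_congr rfl fun i _ => Finset.sum_congr rfl fun j _ => ?_
    rw [pow_add]; ring
  simp only [h]
  rw [intervalIntegral.integral_finset_sum (fun i _ =>
    Continuous.intervalIntegrable (by continuity) _ _)]
  refine Finset.sum_congr rfl fun i _ => ?_
  rw [intervalIntegral.integral_finset_sum (f := fun j x => c i * c j * x ^ ((i:ℕ)+(j:ℕ))) (fun j _ =>
    ((continuous_const.mul (continuous_pow _)).intervalIntegrable _ _))]
  refine Finset.sum_congr rfl fun j _ => ?_
  rw [intervalIntegral.integral_const_mul, integral_pow]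
  push_cast
  ring

lemma Qf_smul (r : ℕ) (t : ℝ) (c : EuclideanSpace ℝ (Fin (r+1))) :
    Qf r (t • c) = t^2 * Qf r c := by
  rw [Qf_eq, Qf_eq, Finset.mul_sum]
  refine Finset.sum_congr rfl fun i _ => ?_
  rw [Finset.mul_sum]
  refine Finset.sum_congr rfl fun j _ => ?_
  have : (t • c) i = t * c i := rfl
  have h2 : (t • c) j = t * c j := rfl
  rw [this, h2]; ring

lemma Qf_continuous (r : ℕ) : Continuous (Qf r) := by
  have : Qf r = fun c : EuclideanSpace ℝ (Fin (r+1)) => ∑ i, ∑ j, c i * c j * (1/((i:ℝ)+(j:ℝ)+1)) := funext (Qf_eq r)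
  rw [this]
  refine continuous_finset_sum _ fun i _ => continuous_finset_sum _ fun j _ => ?_
  have h1 : Continuous fun c : EuclideanSpace ℝ (Fin (r+1)) => c i := (continuous_apply i).comp (PiLp.continuous_ofLp 2 _)
  have h2 : Continuous fun c : EuclideanSpace ℝ (Fin (r+1)) => c j := (continuous_apply j).comp (PiLp.continuous_ofLp 2 _)
  exact (h1.mul h2).mul continuous_const

lemma Qf_pos (r : ℕ) (c : EuclideanSpace ℝ (Fin (r+1))) (hc : c ≠ 0) : 0 < Qf r c := by
  classical
  set p : Polynomial ℝ := ∑ i : Fin (r+1), C (c i) * X ^ (i:ℕ) with hp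
  have heval : ∀ x : ℝ, p.eval x = ∑ i, c i * x ^ (i:ℕ) := by
    intro x; simp [hp, eval_finset_sum]
  have hpne : p ≠ 0 := by
    intro h0
    apply hc
    ext i
    have : p.coeff (i:ℕ) = c i := by
      rw [hp, finset_sum_coeff]
      rw [Finset.sum_eq_single i]
      · simp
      · intro j _ hji
        simp only [coeff_C_mul, coeff_X_pow]
        rw [if_neg (fun hh => hji (Fin.ext hh.symm))]
        ring
      · simp
    rw [h0] at this
    simpa using this.symm
  have hroots : (volume {x : ℝ | p.IsRoot x}) = 0 :=
    (Polynomial.finite_setOf_isRoot hpne).measure_zero _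
  have hQ : Qf r c = ∫ x in Set.Ioc (0:ℝ) 1, (p.eval x)^2 := by
    rw [Qf, ← intervalIntegral.integral_of_le (by norm_num : (0:ℝ) ≤ 1)]
    refine intervalIntegral.integral_congr fun x _ => ?_
    rw [heval]
  rw [hQ]
  rw [MeasureTheory.setIntegral_pos_iff_support_of_nonneg_ae]
  · have hsub : Set.Ioc (0:ℝ) 1 \ {x : ℝ | p.IsRoot x}
        ⊆ Function.support (fun x => (p.eval x)^2) ∩ Set.Ioc 0 1 := by
      intro x hx
      refine ⟨?_, hx.1⟩
      simp only [Function.mem_support]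
      exact pow_ne_zero _ hx.2
    refine lt_of_lt_of_le ?_ (measure_mono hsub)
    rw [measure_diff_null hroots]
    simp [Real.volume_Ioc]
  · exact Filter.Eventually.of_forall fun x => sq_nonneg _
  · exact (Continuous.integrableOn_Ioc (by continuity))

lemma Qf_lower (r : ℕ) : ∃ lam : ℝ, 0 < lam ∧
    ∀ c : EuclideanSpace ℝ (Fin (r+1)), lam * ‖c‖^2 ≤ Qf r c := by
  have hne : (Metric.sphere (0 : EuclideanSpace ℝ (Fin (r+1))) 1).Nonempty :=
    NormedSpace.sphere_nonempty.mpr zero_le_one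
  obtain ⟨c0, hc0mem, hmin⟩ :=
    (isCompact_sphere (0 : EuclideanSpace ℝ (Fin (r+1))) 1).exists_isMinOn hne
      (Qf_continuous r).continuousOn
  have hc0norm : ‖c0‖ = 1 := by simpa using hc0mem
  have hc0ne : c0 ≠ 0 := by
    intro h; rw [h] at hc0norm; simp at hc0norm
  refine ⟨Qf r c0, Qf_pos r c0 hc0ne, ?_⟩
  intro c
  rcases eq_or_ne c 0 with rfl | hc
  · simp [Qf_eq]
  · have hcn : ‖c‖ ≠ 0 := norm_ne_zero_iff.mpr hc
    set d : EuclideanSpace ℝ (Fin (r+1)) := ‖c‖⁻¹ • c with hd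
    have hdnorm : ‖d‖ = 1 := by
      rw [hd, norm_smul, norm_inv, norm_norm, inv_mul_cancel₀ hcn]
    have hcd : c = ‖c‖ • d := by
      rw [hd, smul_smul, mul_inv_cancel₀ hcn, one_smul]
    have hQd : Qf r c0 ≤ Qf r d := hmin (by simpa using hdnorm)
    calc Qf r c0 * ‖c‖^2 ≤ Qf r d * ‖c‖^2 := by
          exact mul_le_mul_of_nonneg_right hQd (sq_nonneg _)
      _ = Qf r (‖c‖ • d) := by rw [Qf_smul r ‖c‖ d]; ring
      _ = Qf r c := by rw [← hcd]

theorem poly_inverse_ineq (r : ℕ) : ∃ Cr : ℝ, 0 < Cr ∧ ∀ w : Polynomial ℝ, w.natDegree ≤ r →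
    ∀ a b : ℝ, a < b → (w.eval a)^2 ≤ Cr / (b - a) * ∫ s in a..b, (w.eval s)^2 := by
  obtain ⟨lam, hlam, hQ⟩ := Qf_lower r
  refine ⟨lam⁻¹, inv_pos.mpr hlam, ?_⟩
  have unit : ∀ z : Polynomial ℝ, z.natDegree ≤ r →
      (z.eval 0)^2 ≤ lam⁻¹ * ∫ x in (0:ℝ)..1, (z.eval x)^2 := by
    intro z hz
    set c : EuclideanSpace ℝ (Fin (r+1)) := WithLp.toLp 2 (fun i : Fin (r+1) => z.coeff i) with hcdef
    have heval : ∀ x : ℝ, z.eval x = ∑ i : Fin (r+1), c i * x ^ (i:ℕ) := by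
      intro x
      rw [Polynomial.eval_eq_sum_range' (lt_of_le_of_lt hz (Nat.lt_succ_self r)) x,
        ← Fin.sum_univ_eq_sum_range (fun i => z.coeff i * x ^ i)]
    have hQc : Qf r c = ∫ x in (0:ℝ)..1, (z.eval x)^2 := by
      unfold Qf
      refine intervalIntegral.integral_congr fun x _ => ?_
      rw [heval]
    have h0 : z.eval 0 = c 0 := by
      rw [heval 0, Fin.sum_univ_succ]
      simp
    have hnormsq : ‖c‖^2 = ∑ i, (c i)^2 := by
      rw [EuclideanSpace.norm_eq, Real.sq_sqrt (Finset.sum_nonneg fun i _ => sq_nonneg _)]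
      exact Finset.sum_congr rfl fun i _ => by rw [Real.norm_eq_abs, sq_abs]
    have hle : (c 0)^2 ≤ ‖c‖^2 := by
      rw [hnormsq]
      exact Finset.single_le_sum (f := fun i => (c i)^2) (fun i _ => sq_nonneg _)
        (Finset.mem_univ 0)
    have := hQ c
    rw [hQc] at this
    rw [h0]
    calc (c 0)^2 ≤ ‖c‖^2 := hle
      _ = lam⁻¹ * (lam * ‖c‖^2) := by field_simp
      _ ≤ lam⁻¹ * ∫ x in (0:ℝ)..1, (z.eval x)^2 := by
          exact mul_le_mul_of_nonneg_left this (le_of_lt (inv_pos.mpr hlam))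
  intro w hw a b hab
  have hpos : 0 < b - a := sub_pos.mpr hab
  have hh : b - a ≠ 0 := ne_of_gt hpos
  set z := w.comp (Polynomial.C (b-a) * Polynomial.X + Polynomial.C a) with hzdef
  have hdeg : z.natDegree ≤ r := by
    rw [hzdef, Polynomial.natDegree_comp]
    have h1 : (Polynomial.C (b-a) * Polynomial.X + Polynomial.C a).natDegree ≤ 1 := by
      refine le_trans (Polynomial.natDegree_add_le _ _) ?_
      simp [Polynomial.natDegree_C_mul_le]
      exact le_trans (Polynomial.natDegree_mul_le) (by simp)
    calc w.natDegree * (Polynomial.C (b-a) * Polynomial.X + Polynomial.C a).natDegree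
        ≤ r * 1 := Nat.mul_le_mul hw h1
      _ = r := by ring
  have hzeval : ∀ x : ℝ, z.eval x = w.eval ((b-a) * x + a) := by
    intro x; simp [hzdef, Polynomial.eval_comp]
  have hint : ∫ x in (0:ℝ)..1, (z.eval x)^2 = (b-a)⁻¹ * ∫ s in a..b, (w.eval s)^2 := by
    simp only [hzeval]
    have h2 := intervalIntegral.integral_comp_mul_add (a := (0:ℝ)) (b := 1)
      (fun s => (w.eval s)^2) hh a
    simp only [mul_zero, zero_add, mul_one, smul_eq_mul] at h2
    rw [h2]
    ring_nf
  have h3 := unit z hdeg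
  rw [hzeval 0] at h3
  simp only [mul_zero, zero_add] at h3
  rw [hint] at h3
  calc (w.eval a)^2 ≤ lam⁻¹ * ((b-a)⁻¹ * ∫ s in a..b, (w.eval s)^2) := h3
    _ = lam⁻¹ / (b - a) * ∫ s in a..b, (w.eval s)^2 := by ring

section Helpers

lemma sum_Icc_split_top (f : ℕ → ℝ) {N : ℕ} (hN : 1 ≤ N) :
    ∑ n ∈ Finset.Icc 1 N, f n = (∑ n ∈ Finset.Icc 1 (N-1), f n) + f N := by
  obtain ⟨M, rfl⟩ : ∃ M, N = M + 1 := ⟨N - 1, (Nat.succ_pred_eq_of_pos hN).symm⟩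
  rw [Finset.sum_Icc_succ_top (by omega : 1 ≤ M + 1)]
  simp

lemma sum_Icc_shift (f : ℕ → ℝ) (N : ℕ) :
    ∑ n ∈ Finset.Icc 1 (N+1), f n = f 1 + ∑ n ∈ Finset.Icc 1 N, f (n+1) := by
  induction N with
  | zero => simp
  | succ M ih =>
      rw [Finset.sum_Icc_succ_top (by omega : 1 ≤ M + 1 + 1), ih,
        Finset.sum_Icc_succ_top (by omega : 1 ≤ M + 1)]
      ring

lemma integral_CS {a b : ℝ} (hab : a ≤ b) (f g : ℝ → ℝ) (hf : Continuous f)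
    (hg : Continuous g) :
    (∫ s in a..b, f s * g s)^2 ≤ (∫ s in a..b, (f s)^2) * (∫ s in a..b, (g s)^2) := by
  set F := ∫ s in a..b, (f s)^2 with hF
  set G := ∫ s in a..b, (g s)^2 with hG
  set I := ∫ s in a..b, f s * g s with hI
  have key : ∀ x : ℝ, 0 ≤ F * (x * x) + (2*I) * x + G := by
    intro x
    have h1 : (0:ℝ) ≤ ∫ s in a..b, (x * f s + g s)^2 :=
      intervalIntegral.integral_nonneg hab (fun s _ => sq_nonneg _)
    have heq : (∫ s in a..b, (x * f s + g s)^2) = F * (x*x) + (2*I) * x + G := by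
      have hptw : ∀ s : ℝ, (x * f s + g s)^2
          = ((x*x) * (f s)^2 + (2*x) * (f s * g s)) + (g s)^2 := fun s => by ring
      simp only [hptw]
      rw [intervalIntegral.integral_add (f := fun s => x * x * f s ^ 2 + 2 * x * (f s * g s))
            (g := fun s => g s ^ 2)
            (((continuous_const.mul (hf.pow 2)).add
              (continuous_const.mul (hf.mul hg))).intervalIntegrable _ _)
            ((hg.pow 2).intervalIntegrable _ _),
          intervalIntegral.integral_add (f := fun s => x * x * f s ^ 2)
            (g := fun s => 2 * x * (f s * g s))
            ((continuous_const.mul (hf.pow 2)).intervalIntegrable _ _)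
            ((continuous_const.mul (hf.mul hg)).intervalIntegrable _ _),
          intervalIntegral.integral_const_mul, intervalIntegral.integral_const_mul]
      ring
    rw [heq] at h1
    linarith
  have hd := discrim_le_zero key
  rw [discrim] at hd
  nlinarith

lemma form_cs {H : Type*} [NormedAddCommGroup H] [InnerProductSpace ℝ H]
    (m : H →ₗ[ℝ] H →ₗ[ℝ] ℝ) (hsym : ∀ x y, m x y = m y x)
    (hpos : ∀ x, 0 ≤ m x x) (x y : H) :
    (m x y)^2 ≤ m x x * m y y := by
  have key : ∀ c : ℝ, 0 ≤ (m y y) * (c*c) + (2 * m x y) * c + m x x := by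
    intro c
    have h := hpos (c • y + x)
    have hyx : m y x = m x y := hsym y x
    have hexp : m (c • y + x) (c • y + x) = (m y y) * (c*c) + (2 * m x y) * c + m x x := by
      simp only [map_add, _root_.map_smul, LinearMap.add_apply, LinearMap.smul_apply,
        smul_eq_mul]
      rw [hyx]; ring
    rw [hexp] at h
    linarith
  have hd := discrim_le_zero key
  rw [discrim] at hd
  nlinarith

lemma m_expand {H : Type*} [NormedAddCommGroup H] [InnerProductSpace ℝ H] {M : ℕ}
    (m : H →ₗ[ℝ] H →ₗ[ℝ] ℝ) (e : Fin M → H) (c d : Fin M → ℝ) :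
    m (∑ ℓ, c ℓ • e ℓ) (∑ k, d k • e k) = ∑ ℓ, ∑ k, c ℓ * d k * m (e ℓ) (e k) := by
  simp only [map_sum, _root_.map_smul, LinearMap.coe_sum, Finset.sum_apply,
    LinearMap.smul_apply, smul_eq_mul]
  rw [Finset.sum_comm]
  refine Finset.sum_congr rfl fun ℓ _ => ?_
  rw [Finset.mul_sum]
  exact Finset.sum_congr rfl fun k _ => by ring

lemma norm_sum_sq {H : Type*} [NormedAddCommGroup H] [InnerProductSpace ℝ H] {M : ℕ}
    (e : OrthonormalBasis (Fin M) ℝ H) (c : Fin M → ℝ) :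
    ‖∑ ℓ, c ℓ • e ℓ‖^2 = ∑ ℓ, (c ℓ)^2 := by
  have horth := e.orthonormal
  have key : ∀ ℓ k : Fin M, (inner ℝ (e ℓ) (e k) : ℝ) = if ℓ = k then 1 else 0 := by
    intro ℓ k
    rcases eq_or_ne ℓ k with rfl | hk
    · simp [real_inner_self_eq_norm_sq, horth.1 ℓ]
    · simp [horth.2 hk, hk]
  rw [← real_inner_self_eq_norm_sq, sum_inner]
  refine Finset.sum_congr rfl fun ℓ _ => ?_
  rw [real_inner_smul_left, inner_sum]
  simp only [real_inner_smul_right, key]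
  simp only [mul_ite, mul_one, mul_zero]
  rw [Finset.sum_ite_eq]
  simp [pow_two]

lemma phi_hasDerivAt {T : ℝ} (hT : 0 < T) (x : ℝ) :
    HasDerivAt (fun s : ℝ => T * Real.exp ((T - s)/T)) (-(T * Real.exp ((T - x)/T))/T) x := by
  have h1 : HasDerivAt (fun s : ℝ => (T - s)/T) (-1/T) x := by
    have := ((hasDerivAt_id x).const_sub T).div_const T
    simpa using this
  have h2 := (Real.hasDerivAt_exp ((T - x)/T)).comp x h1
  have h3 := h2.const_mul T
  refine h3.congr_deriv ?_
  ring

lemma phi_diff_bound {T : ℝ} (hT : 0 < T) {a s : ℝ} (ha : 0 ≤ a) (has : a ≤ s) :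
    (T * Real.exp ((T - s)/T) - T * Real.exp ((T - a)/T))^2
      ≤ (Real.exp 1)^2 * (s - a)^2 := by
  set φ : ℝ → ℝ := fun x => T * Real.exp ((T - x)/T) with hφ
  have hupper : φ s - φ a ≤ 0 := by
    have : (T - s)/T ≤ (T - a)/T := by
      rw [div_le_div_iff₀ hT hT]
      nlinarith
    have := Real.exp_le_exp.mpr this
    have := mul_le_mul_of_nonneg_left this (le_of_lt hT)
    simpa [hφ] using sub_nonpos.mpr this
  have hmono : MonotoneOn (fun x => φ x + Real.exp 1 * x) (Set.Ici (0:ℝ)) := by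
    have hder : ∀ x : ℝ, HasDerivAt (fun x => φ x + Real.exp 1 * x)
        (-(φ x)/T + Real.exp 1) x := by
      intro x
      have h2 : HasDerivAt (fun y : ℝ => Real.exp 1 * y) (Real.exp 1) x := by
        simpa using (hasDerivAt_id x).const_mul (Real.exp 1)
      exact (phi_hasDerivAt hT x).add h2
    apply monotoneOn_of_deriv_nonneg (convex_Ici 0)
    · exact Continuous.continuousOn (by
        have : Continuous φ := by
          apply continuous_const.mul
          exact Real.continuous_exp.comp (by continuity)
        continuity)
    · intro x hx
      exact (hder x).differentiableAt.differentiableWithinAt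
    · intro x hx
      rw [(hder x).deriv]
      rw [interior_Ici] at hx
      have hx0 : (0:ℝ) < x := hx
      have hle : (T - x)/T ≤ 1 := by
        rw [div_le_one hT]; linarith
      have : Real.exp ((T - x)/T) ≤ Real.exp 1 := Real.exp_le_exp.mpr hle
      have hφx : φ x ≤ T * Real.exp 1 := by
        simp only [hφ]
        exact mul_le_mul_of_nonneg_left this (le_of_lt hT)
      have : -(φ x)/T ≥ -Real.exp 1 := by
        rw [ge_iff_le, neg_le, ← neg_div, neg_neg]
        rw [div_le_iff₀ hT]
        linarith
      linarith
  have hlower : -(Real.exp 1 * (s - a)) ≤ φ s - φ a := by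
    have := hmono (Set.mem_Ici.mpr ha) (Set.mem_Ici.mpr (le_trans ha has)) has
    simp only at this
    linarith
  have habs : (φ s - φ a)^2 ≤ (Real.exp 1 * (s - a))^2 := by
    apply sq_le_sq'
    · linarith
    · have : 0 ≤ Real.exp 1 * (s - a) := mul_nonneg (le_of_lt (Real.exp_pos 1)) (by linarith)
      linarith
  calc (φ s - φ a)^2 ≤ (Real.exp 1 * (s-a))^2 := habs
    _ = (Real.exp 1)^2 * (s - a)^2 := by ring

end Helpers

lemma young_bound {H : Type*} [NormedAddCommGroup H] [InnerProductSpace ℝ H]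
    (m : H →ₗ[ℝ] H →ₗ[ℝ] ℝ) (hsym : ∀ x y, m x y = m y x)
    {μs μb θ : ℝ} (hμs : 0 < μs) (hμb : 0 ≤ μb) (hθ : 0 < θ)
    (hbound : ∀ x : H, μs * ‖x‖ ^ 2 ≤ m x x ∧ m x x ≤ μb * ‖x‖ ^ 2) (x y : H) :
    |m x y| ≤ θ*μs/2 * ‖x‖^2 + μb^2/(2*(θ*μs)) * ‖y‖^2 := by
  have hpos : ∀ z : H, 0 ≤ m z z := fun z => le_trans (by positivity) (hbound z).1
  have hcs := form_cs m hsym hpos x y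
  have hx := (hbound x).2
  have hy := (hbound y).2
  have h1 : (m x y)^2 ≤ (μb * (‖x‖ * ‖y‖))^2 := by
    calc (m x y)^2 ≤ m x x * m y y := hcs
      _ ≤ (μb * ‖x‖^2) * (μb * ‖y‖^2) := by
          apply mul_le_mul hx hy (hpos y) (by positivity)
      _ = (μb * (‖x‖ * ‖y‖))^2 := by ring
  have hB : 0 ≤ μb * (‖x‖ * ‖y‖) := by positivity
  have h2 : |m x y| ≤ μb * (‖x‖ * ‖y‖) := by
    rw [← Real.sqrt_sq_eq_abs, show μb * (‖x‖ * ‖y‖) = Real.sqrt ((μb * (‖x‖ * ‖y‖))^2) from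
      (Real.sqrt_sq hB).symm]
    exact Real.sqrt_le_sqrt h1
  have h3 : μb * (‖x‖ * ‖y‖) ≤ θ*μs/2 * ‖x‖^2 + μb^2/(2*(θ*μs)) * ‖y‖^2 := by
    rw [← sub_nonneg]
    have hA : (0:ℝ) < θ * μs := mul_pos hθ hμs
    have expand : θ*μs/2 * ‖x‖^2 + μb^2/(2*(θ*μs)) * ‖y‖^2 - μb * (‖x‖ * ‖y‖)
        = (θ*μs*‖x‖ - μb*‖y‖)^2 / (2*(θ*μs)) := by
      field_simp
      ring
    rw [expand]
    positivity
  linarith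

lemma node_algebra {H : Type*} [NormedAddCommGroup H] [InnerProductSpace ℝ H]
    (m : H →ₗ[ℝ] H →ₗ[ℝ] ℝ) (hsym : ∀ x y, m x y = m y x)
    (γ θ : ℝ) (x y w : H) :
    (1/2) * ((γ + θ) * m x x) - (1/2) * ((γ + θ) * m y y)
        - ((γ + θ) * m (x - y) y + m (x - y) w)
      = (1/2) * ((γ + θ) * m (x - y) (x - y)) - m (x - y) w := by
  have hyx : m y x = m x y := hsym y x
  simp only [map_sub, LinearMap.sub_apply]
  rw [hyx]
  ring

lemma interval_lb {H : Type*} [NormedAddCommGroup H] [InnerProductSpace ℝ H] {M : ℕ}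
    (e : OrthonormalBasis (Fin M) ℝ H) (m : H →ₗ[ℝ] H →ₗ[ℝ] ℝ)
    {μs : ℝ} (hμs : 0 < μs) (hlb : ∀ x : H, μs * ‖x‖ ^ 2 ≤ m x x)
    {T : ℝ} (hT : 0 < T) {a b : ℝ} (hab : a ≤ b) (hbT : b ≤ T)
    (α : Fin M → Polynomial ℝ) (U : ℝ → H)
    (hu : ∀ s, U s = ∑ ℓ, (α ℓ).eval s • e ℓ) :
    (μs/2) * (∫ s in a..b, ‖U s‖^2)
      ≤ (1/(2*T)) * ∫ s in a..b, (T * Real.exp ((T - s)/T)) * m (U s) (U s) := by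
  have hφc : Continuous fun s : ℝ => T * Real.exp ((T - s)/T) :=
    continuous_const.mul (Real.continuous_exp.comp ((continuous_const.sub continuous_id).div_const T))
  have hnu : ∀ s, ‖U s‖^2 = ∑ ℓ, ((α ℓ).eval s)^2 := fun s => by
    rw [hu s]; exact norm_sum_sq e _
  have hcu2 : Continuous fun s : ℝ => ‖U s‖^2 := by
    rw [funext hnu]
    exact continuous_finset_sum _ fun ℓ _ => (Polynomial.continuous _).pow 2
  have hme : ∀ s, m (U s) (U s) = ∑ ℓ, ∑ k, (α ℓ).eval s * (α k).eval s * m (e ℓ) (e k) :=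
    fun s => by rw [hu s]; exact m_expand m e _ _
  have hcm : Continuous fun s : ℝ => m (U s) (U s) := by
    rw [funext hme]
    exact continuous_finset_sum _ fun ℓ _ => continuous_finset_sum _ fun k _ =>
      ((Polynomial.continuous _).mul (Polynomial.continuous _)).mul continuous_const
  have hptw : ∀ s ∈ Set.Icc a b, T * (μs * ‖U s‖^2) ≤ (T * Real.exp ((T - s)/T)) * m (U s) (U s) := by
    intro s hs
    have hφge : T ≤ T * Real.exp ((T - s)/T) := by
      nth_rewrite 1 [← mul_one T]
      apply mul_le_mul_of_nonneg_left _ hT.le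
      exact Real.one_le_exp (div_nonneg (by linarith [hs.2]) hT.le)
    have hg1 : μs * ‖U s‖^2 ≤ m (U s) (U s) := hlb (U s)
    have hg0 : 0 ≤ m (U s) (U s) := le_trans (by positivity) hg1
    calc T * (μs * ‖U s‖^2) ≤ T * m (U s) (U s) := mul_le_mul_of_nonneg_left hg1 hT.le
      _ ≤ (T * Real.exp ((T - s)/T)) * m (U s) (U s) := mul_le_mul_of_nonneg_right hφge hg0
  have hint1 : IntervalIntegrable (fun s => T * (μs * ‖U s‖^2)) MeasureTheory.volume a b :=
    (continuous_const.mul (continuous_const.mul hcu2)).intervalIntegrable a b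
  have hint2 : IntervalIntegrable (fun s => (T * Real.exp ((T - s)/T)) * m (U s) (U s))
      MeasureTheory.volume a b := (hφc.mul hcm).intervalIntegrable a b
  have hmono := intervalIntegral.integral_mono_on hab hint1 hint2 hptw
  rw [intervalIntegral.integral_const_mul, intervalIntegral.integral_const_mul] at hmono
  have htpos : (0:ℝ) < 1/(2*T) := by positivity
  have := mul_le_mul_of_nonneg_left hmono htpos.le
  calc (μs/2) * (∫ s in a..b, ‖U s‖^2)
      = (1/(2*T)) * (T * (μs * ∫ s in a..b, ‖U s‖^2)) := by field_simp
    _ ≤ (1/(2*T)) * ∫ s in a..b, (T * Real.exp ((T - s)/T)) * m (U s) (U s) := this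

lemma interval_eta {H : Type*} [NormedAddCommGroup H] [InnerProductSpace ℝ H] {M : ℕ}
    (e : OrthonormalBasis (Fin M) ℝ H) {r : ℕ} {Cr : ℝ} (hCr : 0 < Cr)
    (hInv : ∀ w : Polynomial ℝ, w.natDegree ≤ r → ∀ a b : ℝ, a < b →
      (w.eval a)^2 ≤ Cr/(b-a) * ∫ s in a..b, (w.eval s)^2)
    {T : ℝ} (hT : 0 < T) {a b : ℝ} (hab : a < b) (ha0 : 0 ≤ a)
    (α q : Fin M → Polynomial ℝ)
    (hα : ∀ ℓ, (α ℓ).natDegree ≤ r) (hq : ∀ ℓ, (q ℓ).natDegree ≤ r)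
    (horth : ∀ ℓ (p : Polynomial ℝ), p.natDegree ≤ r →
      (∫ s in a..b, (T * Real.exp ((T - s)/T) * (α ℓ).eval s - (q ℓ).eval s) * p.eval s) = 0)
    (U : ℝ → H) (hu : ∀ s, U s = ∑ ℓ, (α ℓ).eval s • e ℓ) :
    ‖(∑ ℓ, (q ℓ).eval a • e ℓ) - (T * Real.exp ((T - a)/T)) • U a‖^2
      ≤ Cr * Real.exp 1 ^ 2 * (b - a) * ∫ s in a..b, ‖U s‖^2 := by
  have hφc : Continuous fun s : ℝ => T * Real.exp ((T - s)/T) :=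
    continuous_const.mul (Real.continuous_exp.comp ((continuous_const.sub continuous_id).div_const T))
  set c : ℝ := T * Real.exp ((T - a)/T) with hc
  set d : Fin M → Polynomial ℝ := fun ℓ => q ℓ - Polynomial.C c * α ℓ with hd
  have hηsum : (∑ ℓ, (q ℓ).eval a • e ℓ) - c • U a = ∑ ℓ, (d ℓ).eval a • e ℓ := by
    rw [hu a, Finset.smul_sum, ← Finset.sum_sub_distrib]
    refine Finset.sum_congr rfl fun ℓ _ => ?_
    rw [hd]
    simp only [Polynomial.eval_sub, Polynomial.eval_mul, Polynomial.eval_C]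
    rw [sub_smul, smul_smul]
  rw [hηsum, norm_sum_sq]
  have hdeg : ∀ ℓ, (d ℓ).natDegree ≤ r := by
    intro ℓ
    rw [hd]
    refine le_trans (Polynomial.natDegree_sub_le _ _) (max_le (hq ℓ) ?_)
    exact le_trans (Polynomial.natDegree_C_mul_le _ _) (hα ℓ)
  have contract : ∀ ℓ : Fin M, (∫ s in a..b, ((d ℓ).eval s)^2)
      ≤ ∫ s in a..b, ((T * Real.exp ((T - s)/T) - c) * (α ℓ).eval s)^2 := by
    intro ℓ
    have h0 := horth ℓ (d ℓ) (hdeg ℓ)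
    have int1 : IntervalIntegrable
        (fun s => ((T * Real.exp ((T - s)/T) - c) * (α ℓ).eval s) * (d ℓ).eval s)
        MeasureTheory.volume a b :=
      (((hφc.sub continuous_const).mul (Polynomial.continuous _)).mul
        (Polynomial.continuous _)).intervalIntegrable a b
    have int2 : IntervalIntegrable (fun s => ((d ℓ).eval s)^2) MeasureTheory.volume a b :=
      ((Polynomial.continuous _).pow 2).intervalIntegrable a b
    have hsplit : (∫ s in a..b,
          (T * Real.exp ((T - s)/T) * (α ℓ).eval s - (q ℓ).eval s) * (d ℓ).eval s)
        = (∫ s in a..b, ((T * Real.exp ((T - s)/T) - c) * (α ℓ).eval s) * (d ℓ).eval s)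
          - ∫ s in a..b, ((d ℓ).eval s)^2 := by
      rw [← intervalIntegral.integral_sub int1 int2]
      refine intervalIntegral.integral_congr fun s _ => ?_
      rw [hd]
      simp only [Polynomial.eval_sub, Polynomial.eval_mul, Polynomial.eval_C]
      ring
    rw [hsplit] at h0
    have hIeq : (∫ s in a..b, ((d ℓ).eval s)^2)
        = ∫ s in a..b, ((T * Real.exp ((T - s)/T) - c) * (α ℓ).eval s) * (d ℓ).eval s := by
      linarith
    have hCS := integral_CS hab.le (fun s => (T * Real.exp ((T - s)/T) - c) * (α ℓ).eval s)
      (fun s => (d ℓ).eval s) ((hφc.sub continuous_const).mul (Polynomial.continuous _))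
      (Polynomial.continuous _)
    have hDnn : 0 ≤ ∫ s in a..b, ((d ℓ).eval s)^2 :=
      intervalIntegral.integral_nonneg hab.le (fun s _ => sq_nonneg _)
    have hGnn : 0 ≤ ∫ s in a..b, ((T * Real.exp ((T - s)/T) - c) * (α ℓ).eval s)^2 :=
      intervalIntegral.integral_nonneg hab.le (fun s _ => sq_nonneg _)
    rcases eq_or_lt_of_le hDnn with hD0 | hDpos
    · rw [← hD0]; exact hGnn
    · nlinarith [hCS, hIeq, hDpos]
  have growth : ∀ ℓ : Fin M, (∫ s in a..b, ((T * Real.exp ((T - s)/T) - c) * (α ℓ).eval s)^2)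
      ≤ ∫ s in a..b, Real.exp 1 ^ 2 * (b - a)^2 * ((α ℓ).eval s)^2 := by
    intro ℓ
    have gint1 : IntervalIntegrable
        (fun s => ((T * Real.exp ((T - s)/T) - c) * (α ℓ).eval s)^2) MeasureTheory.volume a b :=
      ((((hφc.sub continuous_const).mul (Polynomial.continuous _))).pow 2).intervalIntegrable a b
    have gint2 : IntervalIntegrable
        (fun s => Real.exp 1 ^ 2 * (b - a)^2 * ((α ℓ).eval s)^2) MeasureTheory.volume a b :=
      (continuous_const.mul ((Polynomial.continuous _).pow 2)).intervalIntegrable a b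
    apply intervalIntegral.integral_mono_on hab.le gint1 gint2
    intro s hs
    have h1 : (s - a)^2 ≤ (b - a)^2 := by nlinarith [hs.1, hs.2]
    have hα2 : (0:ℝ) ≤ ((α ℓ).eval s)^2 := sq_nonneg _
    have hφd : (T * Real.exp ((T - s)/T) - c)^2 ≤ Real.exp 1 ^ 2 * (s - a)^2 := by
      rw [hc]; exact phi_diff_bound hT ha0 hs.1
    calc ((T * Real.exp ((T - s)/T) - c) * (α ℓ).eval s)^2
        = (T * Real.exp ((T - s)/T) - c)^2 * ((α ℓ).eval s)^2 := by ring
      _ ≤ (Real.exp 1 ^ 2 * (s - a)^2) * ((α ℓ).eval s)^2 :=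
          mul_le_mul_of_nonneg_right hφd hα2
      _ ≤ Real.exp 1 ^ 2 * (b - a)^2 * ((α ℓ).eval s)^2 := by
          apply mul_le_mul_of_nonneg_right _ hα2
          nlinarith [sq_nonneg (Real.exp 1)]
  have hXsum : (∫ s in a..b, ‖U s‖^2) = ∑ ℓ, ∫ s in a..b, ((α ℓ).eval s)^2 := by
    have e1 : (∫ s in a..b, ‖U s‖^2) = ∫ s in a..b, ∑ ℓ, ((α ℓ).eval s)^2 :=
      intervalIntegral.integral_congr fun s _ => by rw [hu s]; exact norm_sum_sq e _
    rw [e1]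
    exact intervalIntegral.integral_finset_sum
      (fun ℓ _ => ((Polynomial.continuous _).pow 2).intervalIntegrable _ _)
  have hba : (0:ℝ) < b - a := sub_pos.mpr hab
  calc (∑ ℓ, ((d ℓ).eval a)^2)
      ≤ ∑ ℓ, Cr/(b-a) * ∫ s in a..b, ((d ℓ).eval s)^2 :=
        Finset.sum_le_sum fun ℓ _ => hInv (d ℓ) (hdeg ℓ) a b hab
    _ ≤ ∑ ℓ, Cr/(b-a) * (Real.exp 1 ^ 2 * (b - a)^2 * ∫ s in a..b, ((α ℓ).eval s)^2) := by
        refine Finset.sum_le_sum fun ℓ _ => ?_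
        apply mul_le_mul_of_nonneg_left _ (by positivity)
        refine le_trans (contract ℓ) (le_trans (growth ℓ) ?_)
        rw [intervalIntegral.integral_const_mul]
    _ = Cr * Real.exp 1 ^ 2 * (b - a) * ∑ ℓ, ∫ s in a..b, ((α ℓ).eval s)^2 := by
        rw [Finset.mul_sum]
        refine Finset.sum_congr rfl fun ℓ _ => ?_
        field_simp
    _ = Cr * Real.exp 1 ^ 2 * (b - a) * ∫ s in a..b, ‖U s‖^2 := by rw [hXsum]

lemma interval_key {H : Type*} [NormedAddCommGroup H] [InnerProductSpace ℝ H] {M : ℕ}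
    (e : OrthonormalBasis (Fin M) ℝ H) (m : H →ₗ[ℝ] H →ₗ[ℝ] ℝ)
    (hsym : ∀ x y, m x y = m y x)
    {T : ℝ} (hT : 0 < T) {a b : ℝ}
    {r : ℕ} (α q : Fin M → Polynomial ℝ)
    (hα : ∀ ℓ, (α ℓ).natDegree ≤ r)
    (horth : ∀ ℓ (p : Polynomial ℝ), p.natDegree ≤ r →
      (∫ s in a..b, (T * Real.exp ((T - s)/T) * (α ℓ).eval s - (q ℓ).eval s) * p.eval s) = 0)
    (θ : ℝ) (U dU V : ℝ → H)
    (hu : ∀ s, U s = ∑ ℓ, (α ℓ).eval s • e ℓ)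
    (hdu : ∀ s, dU s = ∑ ℓ, ((α ℓ).derivative).eval s • e ℓ)
    (hv : ∀ s, V s = (∑ ℓ, (q ℓ).eval s • e ℓ) + θ • U s) :
    (∫ s in a..b, m (dU s) (V s))
      = (1/2) * ((T * Real.exp ((T - b)/T) + θ) * m (U b) (U b))
        - (1/2) * ((T * Real.exp ((T - a)/T) + θ) * m (U a) (U a))
        + (1/(2*T)) * ∫ s in a..b, (T * Real.exp ((T - s)/T)) * m (U s) (U s) := by
  classical
  have hφc : Continuous fun s : ℝ => T * Real.exp ((T - s)/T) :=
    continuous_const.mul (Real.continuous_exp.comp ((continuous_const.sub continuous_id).div_const T))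
  set p2 : Polynomial ℝ := ∑ ℓ, ∑ k, α ℓ * α k * Polynomial.C (m (e ℓ) (e k)) with hp2
  set pD : Polynomial ℝ := ∑ ℓ, ∑ k, (α ℓ).derivative * α k * Polynomial.C (m (e ℓ) (e k)) with hpD
  have heval3 : ∀ (A B : Fin M → Polynomial ℝ) (s : ℝ),
      (∑ ℓ, ∑ k, A ℓ * B k * Polynomial.C (m (e ℓ) (e k))).eval s
        = ∑ ℓ, ∑ k, (A ℓ).eval s * (B k).eval s * m (e ℓ) (e k) := by
    intro A B s
    rw [Polynomial.eval_finset_sum]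
    refine Finset.sum_congr rfl fun ℓ _ => ?_
    rw [Polynomial.eval_finset_sum]
    refine Finset.sum_congr rfl fun k _ => ?_
    simp [Polynomial.eval_mul]
  have hp2e : ∀ s, p2.eval s = m (U s) (U s) := by
    intro s
    rw [hp2, heval3, hu s]
    exact (m_expand m e _ _).symm
  have hpDe : ∀ s, pD.eval s = m (dU s) (U s) := by
    intro s
    rw [hpD, heval3, hdu s, hu s]
    exact (m_expand m e _ _).symm
  have hp2d : ∀ s, (Polynomial.derivative p2).eval s = 2 * pD.eval s := by
    intro s
    have hder : Polynomial.derivative p2 = ∑ ℓ, ∑ k,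
        ((α ℓ).derivative * α k + α ℓ * (α k).derivative) * Polynomial.C (m (e ℓ) (e k)) := by
      rw [hp2, Polynomial.derivative_sum]
      refine Finset.sum_congr rfl fun ℓ _ => ?_
      rw [Polynomial.derivative_sum]
      refine Finset.sum_congr rfl fun k _ => ?_
      rw [Polynomial.derivative_mul, Polynomial.derivative_C, Polynomial.derivative_mul]
      ring
    rw [hder]
    have e1 : (∑ ℓ, ∑ k, ((α ℓ).derivative * α k + α ℓ * (α k).derivative)
          * Polynomial.C (m (e ℓ) (e k))).eval s
        = (∑ ℓ, ∑ k, ((α ℓ).derivative).eval s * (α k).eval s * m (e ℓ) (e k))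
          + ∑ ℓ, ∑ k, (α ℓ).eval s * ((α k).derivative).eval s * m (e ℓ) (e k) := by
      rw [Polynomial.eval_finset_sum, ← Finset.sum_add_distrib]
      refine Finset.sum_congr rfl fun ℓ _ => ?_
      rw [Polynomial.eval_finset_sum, ← Finset.sum_add_distrib]
      refine Finset.sum_congr rfl fun k _ => ?_
      simp only [Polynomial.eval_mul, Polynomial.eval_add, Polynomial.eval_C]
      ring
    rw [e1, hpD, heval3]
    have swap : (∑ ℓ, ∑ k, (α ℓ).eval s * ((α k).derivative).eval s * m (e ℓ) (e k))
        = ∑ ℓ, ∑ k, ((α ℓ).derivative).eval s * (α k).eval s * m (e ℓ) (e k) := by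
      rw [Finset.sum_comm]
      refine Finset.sum_congr rfl fun k _ => Finset.sum_congr rfl fun ℓ _ => ?_
      rw [hsym (e ℓ) (e k)]
      ring
    rw [swap]
    ring
  -- FTC for m(dU,U)
  have hIntD : IntervalIntegrable (fun s => m (dU s) (U s)) MeasureTheory.volume a b := by
    have : (fun s => m (dU s) (U s)) = fun s => pD.eval s := funext fun s => (hpDe s).symm
    rw [this]
    exact (Polynomial.continuous pD).intervalIntegrable a b
  have ftc_g : (∫ s in a..b, m (dU s) (U s)) = (1/2) * (m (U b) (U b) - m (U a) (U a)) := by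
    have hD : ∀ s ∈ Set.uIcc a b, HasDerivAt (fun x => (1/2) * p2.eval x) (m (dU s) (U s)) s := by
      intro s _
      have h := (p2.hasDerivAt s).const_mul (1/2 : ℝ)
      refine h.congr_deriv ?_
      rw [hp2d, hpDe]
      ring
    rw [intervalIntegral.integral_eq_sub_of_hasDerivAt hD hIntD]
    rw [hp2e, hp2e]
    ring
  -- FTC for φ * m(dU,U)
  have ftc_phig : (∫ s in a..b, (T * Real.exp ((T - s)/T)) * m (dU s) (U s))
      = (1/2) * ((T * Real.exp ((T - b)/T)) * m (U b) (U b)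
          - (T * Real.exp ((T - a)/T)) * m (U a) (U a))
        + (1/(2*T)) * ∫ s in a..b, (T * Real.exp ((T - s)/T)) * m (U s) (U s) := by
    have hD : ∀ s ∈ Set.uIcc a b, HasDerivAt
        (fun x => (1/2) * ((T * Real.exp ((T - x)/T)) * p2.eval x))
        ((T * Real.exp ((T - s)/T)) * m (dU s) (U s)
          - (1/(2*T)) * ((T * Real.exp ((T - s)/T)) * p2.eval s)) s := by
      intro s _
      have h := ((phi_hasDerivAt hT s).mul (p2.hasDerivAt s)).const_mul (1/2 : ℝ)
      refine h.congr_deriv ?_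
      rw [hp2d, hpDe]
      ring
    have hIntBig : IntervalIntegrable (fun s => (T * Real.exp ((T - s)/T)) * m (dU s) (U s)
        - (1/(2*T)) * ((T * Real.exp ((T - s)/T)) * p2.eval s)) MeasureTheory.volume a b := by
      apply Continuous.intervalIntegrable
      have h1 : Continuous (fun s => (T * Real.exp ((T - s)/T)) * m (dU s) (U s)) := by
        have : (fun s => (T * Real.exp ((T - s)/T)) * m (dU s) (U s))
            = fun s => (T * Real.exp ((T - s)/T)) * pD.eval s :=
          funext fun s => by rw [hpDe]
        rw [this]
        exact hφc.mul (Polynomial.continuous pD)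
      exact h1.sub (continuous_const.mul (hφc.mul (Polynomial.continuous p2)))
    have hsub := intervalIntegral.integral_eq_sub_of_hasDerivAt hD hIntBig
    have hint1 : IntervalIntegrable (fun s => (T * Real.exp ((T - s)/T)) * m (dU s) (U s))
        MeasureTheory.volume a b := by
      have : (fun s => (T * Real.exp ((T - s)/T)) * m (dU s) (U s))
          = fun s => (T * Real.exp ((T - s)/T)) * pD.eval s := funext fun s => by rw [hpDe]
      rw [this]
      exact (hφc.mul (Polynomial.continuous pD)).intervalIntegrable a b
    have hint2 : IntervalIntegrable (fun s => (1/(2*T)) * ((T * Real.exp ((T - s)/T)) * p2.eval s))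
        MeasureTheory.volume a b :=
      (continuous_const.mul (hφc.mul (Polynomial.continuous p2))).intervalIntegrable a b
    rw [intervalIntegral.integral_sub hint1 hint2] at hsub
    have hIφ : (∫ s in a..b, (1/(2*T)) * ((T * Real.exp ((T - s)/T)) * p2.eval s))
        = (1/(2*T)) * ∫ s in a..b, (T * Real.exp ((T - s)/T)) * m (U s) (U s) := by
      rw [intervalIntegral.integral_const_mul]
      congr 1
      refine intervalIntegral.integral_congr fun s _ => ?_
      rw [hp2e]
    rw [hIφ] at hsub
    have hb2 : p2.eval b = m (U b) (U b) := hp2e b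
    have ha2 : p2.eval a = m (U a) (U a) := hp2e a
    rw [hb2, ha2] at hsub
    linarith
  -- orthogonality
  have lhs_expandQ : ∀ s, m (dU s) (∑ ℓ, (q ℓ).eval s • e ℓ)
      = ∑ ℓ, ∑ k, m (e ℓ) (e k) * (((α ℓ).derivative).eval s * (q k).eval s) := by
    intro s
    rw [hdu s, m_expand]
    exact Finset.sum_congr rfl fun ℓ _ => Finset.sum_congr rfl fun k _ => by ring
  have rhs_expand : ∀ s, (T * Real.exp ((T - s)/T)) * m (dU s) (U s)
      = ∑ ℓ, ∑ k, m (e ℓ) (e k)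
          * ((T * Real.exp ((T - s)/T)) * ((α k).eval s * ((α ℓ).derivative).eval s)) := by
    intro s
    rw [hdu s, hu s, m_expand, Finset.mul_sum]
    refine Finset.sum_congr rfl fun ℓ _ => ?_
    rw [Finset.mul_sum]
    exact Finset.sum_congr rfl fun k _ => by ring
  have per : ∀ ℓ k : Fin M,
      (∫ s in a..b, ((α ℓ).derivative).eval s * (q k).eval s)
        = ∫ s in a..b, (T * Real.exp ((T - s)/T)) * ((α k).eval s * ((α ℓ).derivative).eval s) := by
    intro ℓ k
    have hdeg : ((α ℓ).derivative).natDegree ≤ r :=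
      le_trans (Polynomial.natDegree_derivative_le _) (le_trans (Nat.sub_le _ 1) (hα ℓ))
    have h0 := horth k ((α ℓ).derivative) hdeg
    have intA : IntervalIntegrable
        (fun s => (T * Real.exp ((T - s)/T)) * ((α k).eval s * ((α ℓ).derivative).eval s))
        MeasureTheory.volume a b :=
      (hφc.mul ((Polynomial.continuous _).mul (Polynomial.continuous _))).intervalIntegrable a b
    have intB : IntervalIntegrable (fun s => ((α ℓ).derivative).eval s * (q k).eval s)
        MeasureTheory.volume a b :=
      ((Polynomial.continuous _).mul (Polynomial.continuous _)).intervalIntegrable a b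
    have hsplit2 : (∫ s in a..b,
          (T * Real.exp ((T - s)/T) * (α k).eval s - (q k).eval s) * ((α ℓ).derivative).eval s)
        = (∫ s in a..b, (T * Real.exp ((T - s)/T)) * ((α k).eval s * ((α ℓ).derivative).eval s))
          - ∫ s in a..b, ((α ℓ).derivative).eval s * (q k).eval s := by
      rw [← intervalIntegral.integral_sub intA intB]
      exact intervalIntegral.integral_congr fun s _ => by ring
    rw [hsplit2] at h0
    linarith
  have orth : (∫ s in a..b, m (dU s) (∑ ℓ, (q ℓ).eval s • e ℓ))
      = ∫ s in a..b, (T * Real.exp ((T - s)/T)) * m (dU s) (U s) := by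
    have e1 : (∫ s in a..b, m (dU s) (∑ ℓ, (q ℓ).eval s • e ℓ))
        = ∑ ℓ, ∑ k, m (e ℓ) (e k) * ∫ s in a..b, ((α ℓ).derivative).eval s * (q k).eval s := by
      have e0 : (∫ s in a..b, m (dU s) (∑ ℓ, (q ℓ).eval s • e ℓ))
          = ∫ s in a..b, ∑ ℓ, ∑ k, m (e ℓ) (e k) * (((α ℓ).derivative).eval s * (q k).eval s) :=
        intervalIntegral.integral_congr fun s _ => lhs_expandQ s
      rw [e0, intervalIntegral.integral_finset_sum (fun ℓ _ =>
        Continuous.intervalIntegrable (continuous_finset_sum _ fun k _ =>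
          continuous_const.mul ((Polynomial.continuous _).mul (Polynomial.continuous _)) :
          Continuous fun s => ∑ k, m (e ℓ) (e k) * (((α ℓ).derivative).eval s * (q k).eval s)) _ _)]
      refine Finset.sum_congr rfl fun ℓ _ => ?_
      rw [intervalIntegral.integral_finset_sum
        (f := fun k s => m (e ℓ) (e k) * (((α ℓ).derivative).eval s * (q k).eval s)) (fun k _ =>
        (continuous_const.mul ((Polynomial.continuous _).mul (Polynomial.continuous _))).intervalIntegrable _ _)]
      exact Finset.sum_congr rfl fun k _ => intervalIntegral.integral_const_mul _ _
    have e2 : (∫ s in a..b, (T * Real.exp ((T - s)/T)) * m (dU s) (U s))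
        = ∑ ℓ, ∑ k, m (e ℓ) (e k) * ∫ s in a..b,
            (T * Real.exp ((T - s)/T)) * ((α k).eval s * ((α ℓ).derivative).eval s) := by
      have e0 : (∫ s in a..b, (T * Real.exp ((T - s)/T)) * m (dU s) (U s))
          = ∫ s in a..b, ∑ ℓ, ∑ k, m (e ℓ) (e k)
              * ((T * Real.exp ((T - s)/T)) * ((α k).eval s * ((α ℓ).derivative).eval s)) :=
        intervalIntegral.integral_congr fun s _ => rhs_expand s
      rw [e0, intervalIntegral.integral_finset_sum (fun ℓ _ =>
        Continuous.intervalIntegrable (continuous_finset_sum _ fun k _ =>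
          continuous_const.mul (hφc.mul ((Polynomial.continuous _).mul (Polynomial.continuous _))) :
          Continuous fun s => ∑ k, m (e ℓ) (e k)
            * ((T * Real.exp ((T - s)/T)) * ((α k).eval s * ((α ℓ).derivative).eval s))) _ _)]
      refine Finset.sum_congr rfl fun ℓ _ => ?_
      rw [intervalIntegral.integral_finset_sum
        (f := fun k s => m (e ℓ) (e k)
          * ((T * Real.exp ((T - s)/T)) * ((α k).eval s * ((α ℓ).derivative).eval s))) (fun k _ =>
        (continuous_const.mul (hφc.mul ((Polynomial.continuous _).mul (Polynomial.continuous _)))).intervalIntegrable _ _)]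
      exact Finset.sum_congr rfl fun k _ => intervalIntegral.integral_const_mul _ _
    rw [e1, e2]
    exact Finset.sum_congr rfl fun ℓ _ => Finset.sum_congr rfl fun k _ => by rw [per ℓ k]
  -- split the integrand
  have hsplit : ∀ s, m (dU s) (V s)
      = m (dU s) (∑ ℓ, (q ℓ).eval s • e ℓ) + θ * m (dU s) (U s) := by
    intro s
    rw [hv s, map_add, _root_.map_smul, smul_eq_mul]
  have contQ : Continuous fun s => m (dU s) (∑ ℓ, (q ℓ).eval s • e ℓ) := by
    have : (fun s => m (dU s) (∑ ℓ, (q ℓ).eval s • e ℓ))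
        = fun s => ∑ ℓ, ∑ k, m (e ℓ) (e k) * (((α ℓ).derivative).eval s * (q k).eval s) :=
      funext lhs_expandQ
    rw [this]
    exact continuous_finset_sum _ fun ℓ _ => continuous_finset_sum _ fun k _ =>
      continuous_const.mul ((Polynomial.continuous _).mul (Polynomial.continuous _))
  have eint : (∫ s in a..b, m (dU s) (V s))
      = (∫ s in a..b, m (dU s) (∑ ℓ, (q ℓ).eval s • e ℓ))
        + θ * ∫ s in a..b, m (dU s) (U s) := by
    have e0 : (∫ s in a..b, m (dU s) (V s))
        = ∫ s in a..b, (m (dU s) (∑ ℓ, (q ℓ).eval s • e ℓ) + θ * m (dU s) (U s)) :=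
      intervalIntegral.integral_congr fun s _ => hsplit s
    rw [e0, intervalIntegral.integral_add (g := fun s => θ * m (dU s) (U s)) (contQ.intervalIntegrable _ _)
      ((continuous_const.mul (by
        have : (fun s => m (dU s) (U s)) = fun s => pD.eval s := funext fun s => (hpDe s).symm
        rw [this]
        exact Polynomial.continuous pD) : Continuous fun s => θ * m (dU s) (U s)).intervalIntegrable _ _),
      intervalIntegral.integral_const_mul]
  rw [eint, orth, ftc_phig, ftc_g]
  ring

universe u

set_option maxHeartbeats 1600000 in
/-- Lower bound for the upwind discontinuous Galerkin time-derivative form `m^{∂t}`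
associated with a discrete inner product `m`, tested with the nonstandard test
function `v = Π_r(φ_T u) + θ u`, yielding `L²`-in-time and jump control.  The
constant `C` depends only on the polynomial degree `r` in time. -/
theorem dg_mass_form_lower_bound (r : ℕ) :
    ∃ C : ℝ, 0 < C ∧
      ∀ (H : Type u) [NormedAddCommGroup H] [InnerProductSpace ℝ H]
        [FiniteDimensional ℝ H],
      ∀ (m : H →ₗ[ℝ] H →ₗ[ℝ] ℝ), (∀ x y : H, m x y = m y x) →
      ∀ μs μb : ℝ, 0 < μs → μs ≤ μb →
        (∀ x : H, μs * ‖x‖ ^ 2 ≤ m x x ∧ m x x ≤ μb * ‖x‖ ^ 2) →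
      ∀ (T : ℝ), 0 < T → ∀ (N : ℕ), 1 ≤ N → ∀ t : ℕ → ℝ,
        t 0 = 0 → t N = T → (∀ n < N, t n < t (n + 1)) →
      ∀ τ : ℝ, (∀ n, 1 ≤ n → n ≤ N → t n - t (n - 1) ≤ τ) →
      ∀ (M : ℕ) (e : OrthonormalBasis (Fin M) ℝ H)
        (α q : ℕ → Fin M → Polynomial ℝ),
        (∀ n ℓ, (α n ℓ).natDegree ≤ r) → (∀ n ℓ, (q n ℓ).natDegree ≤ r) →
        (∀ n ∈ Finset.Icc 1 N, ∀ ℓ : Fin M, ∀ p : Polynomial ℝ, p.natDegree ≤ r →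
          (∫ s in (t (n - 1))..(t n),
            (T * Real.exp ((T - s) / T) * (α n ℓ).eval s - (q n ℓ).eval s) *
              p.eval s) = 0) →
      ∀ θ : ℝ, 0 < θ →
      ∀ u du v : ℕ → ℝ → H,
        (∀ n s, u n s = ∑ ℓ, (α n ℓ).eval s • e ℓ) →
        (∀ n s, du n s = ∑ ℓ, ((α n ℓ).derivative).eval s • e ℓ) →
        (∀ n s, v n s = (∑ ℓ, (q n ℓ).eval s • e ℓ) + θ • u n s) →
        (∑ n ∈ Finset.Icc 1 N, ∫ s in (t (n - 1))..(t n), m (du n s) (v n s))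
            - (∑ n ∈ Finset.Icc 1 (N - 1),
                m (u n (t n) - u (n + 1) (t n)) (v (n + 1) (t n)))
            + m (u 1 0) (v 1 0) ≥
          μs * ((1 / 2 - (μb / μs) ^ 2 * C * τ / (2 * θ)) *
              (∑ n ∈ Finset.Icc 1 N, ∫ s in (t (n - 1))..(t n), ‖u n s‖ ^ 2)
            + T * ((1 / 2) * (‖u N T‖ ^ 2 +
                (∑ n ∈ Finset.Icc 1 (N - 1), ‖u n (t n) - u (n + 1) (t n)‖ ^ 2) +
                ‖u 1 0‖ ^ 2))) := by
  classical
  obtain ⟨Cr, hCr, hInv⟩ := poly_inverse_ineq r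
  refine ⟨Cr * Real.exp 1 ^ 2, by positivity, ?_⟩
  intro H _ _ _ m hsym μs μb hμs hμsb hbound T hT N hN t ht0 htN htlt τ hτ
    M e α q hα hq horth θ hθ u du v hu hdu hv
  have hμb0 : (0:ℝ) ≤ μb := le_trans hμs.le hμsb
  have hμsne : μs ≠ 0 := ne_of_gt hμs
  have hθne : θ ≠ 0 := ne_of_gt hθ
  -- monotonicity of the time partition
  have tmono : ∀ j, j ≤ N → ∀ i, i ≤ j → t i ≤ t j := by
    intro j
    induction j with
    | zero => intro _ i hi; rw [Nat.le_zero.mp hi]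
    | succ k ih =>
        intro hkN i hi
        rcases eq_or_lt_of_le hi with h | h
        · rw [h]
        · have hik : i ≤ k := Nat.lt_succ_iff.mp h
          exact le_trans (ih (by omega) i hik) (le_of_lt (htlt k (by omega)))
  have hivl : ∀ n, 1 ≤ n → n ≤ N → t (n-1) < t n ∧ 0 ≤ t (n-1) ∧ t n ≤ T := by
    intro n h1 h2
    refine ⟨?_, ?_, ?_⟩
    · have h := htlt (n-1) (by omega)
      have hn : n - 1 + 1 = n := by omega
      rwa [hn] at h
    · have h := tmono (n-1) (by omega) 0 (by omega)
      rwa [ht0] at h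
    · have h := tmono N le_rfl n h2
      rwa [htN] at h
  have hτpos : 0 < τ := by
    have h1 := (hivl 1 le_rfl hN).1
    have h2 := hτ 1 le_rfl hN
    linarith
  -- per-interval facts
  have kEq : ∀ n ∈ Finset.Icc 1 N, (∫ s in t (n-1)..t n, m (du n s) (v n s))
      = (1/2) * ((T * Real.exp ((T - t n)/T) + θ) * m (u n (t n)) (u n (t n)))
        - (1/2) * ((T * Real.exp ((T - t (n-1))/T) + θ) * m (u n (t (n-1))) (u n (t (n-1))))
        + (1/(2*T)) * ∫ s in t (n-1)..t n, (T * Real.exp ((T - s)/T)) * m (u n s) (u n s) := by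
    intro n hn
    exact interval_key e m hsym hT (α n) (q n) (hα n)
      (fun ℓ p hp => horth n hn ℓ p hp) θ (u n) (du n) (v n) (hu n) (hdu n) (hv n)
  have kLB : ∀ n ∈ Finset.Icc 1 N,
      (μs/2) * (∫ s in t (n-1)..t n, ‖u n s‖^2)
        ≤ (1/(2*T)) * ∫ s in t (n-1)..t n, (T * Real.exp ((T - s)/T)) * m (u n s) (u n s) := by
    intro n hn
    obtain ⟨h1, h2⟩ := Finset.mem_Icc.mp hn
    obtain ⟨hab, ha0, hbT⟩ := hivl n h1 h2
    exact interval_lb e m hμs (fun x => (hbound x).1) hT hab.le hbT (α n) (u n) (hu n)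
  have kEta : ∀ n ∈ Finset.Icc 1 N,
      ‖(∑ ℓ, (q n ℓ).eval (t (n-1)) • e ℓ)
          - (T * Real.exp ((T - t (n-1))/T)) • u n (t (n-1))‖^2
        ≤ Cr * Real.exp 1 ^ 2 * τ * ∫ s in t (n-1)..t n, ‖u n s‖^2 := by
    intro n hn
    obtain ⟨h1, h2⟩ := Finset.mem_Icc.mp hn
    obtain ⟨hab, ha0, hbT⟩ := hivl n h1 h2
    have base := interval_eta e hCr hInv hT hab ha0 (α n) (q n) (hα n) (hq n)
      (fun ℓ p hp => horth n hn ℓ p hp) (u n) (hu n)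
    have hX0 : 0 ≤ ∫ s in t (n-1)..t n, ‖u n s‖^2 :=
      intervalIntegral.integral_nonneg hab.le (fun s _ => sq_nonneg _)
    have hbaτ : t n - t (n-1) ≤ τ := hτ n h1 h2
    exact le_trans base
      (mul_le_mul_of_nonneg_right (mul_le_mul_of_nonneg_left hbaτ (by positivity)) hX0)
  -- reindex with N = N' + 1
  obtain ⟨N', rfl⟩ : ∃ N', N = N' + 1 := ⟨N - 1, by omega⟩
  simp only [Nat.add_sub_cancel]
  -- decompose the sum of the integrals
  have S1 : (∑ n ∈ Finset.Icc 1 (N'+1), ∫ s in t (n-1)..t n, m (du n s) (v n s))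
      = (∑ n ∈ Finset.Icc 1 (N'+1),
          ((1/2) * ((T * Real.exp ((T - t n)/T) + θ) * m (u n (t n)) (u n (t n)))
            - (1/2) * ((T * Real.exp ((T - t (n-1))/T) + θ)
                * m (u n (t (n-1))) (u n (t (n-1))))))
        + ∑ n ∈ Finset.Icc 1 (N'+1),
            (1/(2*T)) * ∫ s in t (n-1)..t n, (T * Real.exp ((T - s)/T)) * m (u n s) (u n s) := by
    rw [← Finset.sum_add_distrib]
    exact Finset.sum_congr rfl fun n hn => by rw [kEq n hn]
  have hexpT : T * Real.exp ((T - T)/T) = T := by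
    rw [sub_self, zero_div, Real.exp_zero, mul_one]
  have S2 : (∑ n ∈ Finset.Icc 1 (N'+1),
        ((1/2) * ((T * Real.exp ((T - t n)/T) + θ) * m (u n (t n)) (u n (t n)))
          - (1/2) * ((T * Real.exp ((T - t (n-1))/T) + θ)
              * m (u n (t (n-1))) (u n (t (n-1))))))
      = (∑ n ∈ Finset.Icc 1 N',
          ((1/2) * ((T * Real.exp ((T - t n)/T) + θ) * m (u n (t n)) (u n (t n)))
            - (1/2) * ((T * Real.exp ((T - t n)/T) + θ)
                * m (u (n+1) (t n)) (u (n+1) (t n)))))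
        + (1/2) * ((T + θ) * m (u (N'+1) T) (u (N'+1) T))
        - (1/2) * ((T * Real.exp ((T - 0)/T) + θ) * m (u 1 0) (u 1 0)) := by
    rw [Finset.sum_sub_distrib]
    rw [sum_Icc_split_top
      (fun n => (1/2) * ((T * Real.exp ((T - t n)/T) + θ) * m (u n (t n)) (u n (t n))))
      (by omega : 1 ≤ N'+1)]
    rw [sum_Icc_shift
      (fun n => (1/2) * ((T * Real.exp ((T - t (n-1))/T) + θ)
        * m (u n (t (n-1))) (u n (t (n-1))))) N']
    simp only [Nat.add_sub_cancel, Nat.sub_self]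
    rw [ht0, htN, hexpT, Finset.sum_sub_distrib]
    ring
  have S3 : (∑ n ∈ Finset.Icc 1 N', m (u n (t n) - u (n+1) (t n)) (v (n+1) (t n)))
      = ∑ n ∈ Finset.Icc 1 N',
          ((T * Real.exp ((T - t n)/T) + θ) * m (u n (t n) - u (n+1) (t n)) (u (n+1) (t n))
            + m (u n (t n) - u (n+1) (t n))
                ((∑ ℓ, (q (n+1) ℓ).eval (t n) • e ℓ)
                  - (T * Real.exp ((T - t n)/T)) • u (n+1) (t n))) := by
    refine Finset.sum_congr rfl fun n hn => ?_
    have hdec : v (n+1) (t n)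
        = (T * Real.exp ((T - t n)/T)) • u (n+1) (t n)
          + (((∑ ℓ, (q (n+1) ℓ).eval (t n) • e ℓ)
              - (T * Real.exp ((T - t n)/T)) • u (n+1) (t n)) + θ • u (n+1) (t n)) := by
      rw [hv (n+1) (t n)]
      abel
    rw [hdec, map_add, map_add, _root_.map_smul, _root_.map_smul, smul_eq_mul, smul_eq_mul]
    ring
  have Sinit : m (u 1 0) (v 1 0)
      = (T * Real.exp ((T - 0)/T) + θ) * m (u 1 0) (u 1 0)
        + m (u 1 0) ((∑ ℓ, (q 1 ℓ).eval 0 • e ℓ) - (T * Real.exp ((T - 0)/T)) • u 1 0) := by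
    have hdec : v 1 0
        = (T * Real.exp ((T - 0)/T)) • u 1 0
          + (((∑ ℓ, (q 1 ℓ).eval 0 • e ℓ) - (T * Real.exp ((T - 0)/T)) • u 1 0) + θ • u 1 0) := by
      rw [hv 1 0]
      abel
    rw [hdec, map_add, map_add, _root_.map_smul, _root_.map_smul, smul_eq_mul, smul_eq_mul]
    ring
  -- lower bound the node terms
  have nodeLB : ∀ n ∈ Finset.Icc 1 N',
      μs * (T/2) * ‖u n (t n) - u (n+1) (t n)‖^2
        - (μb^2/(2*(θ*μs)) * (Cr * Real.exp 1 ^ 2 * τ))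
            * (∫ s in t n..t (n+1), ‖u (n+1) s‖^2)
      ≤ (1/2) * ((T * Real.exp ((T - t n)/T) + θ) * m (u n (t n)) (u n (t n)))
          - (1/2) * ((T * Real.exp ((T - t n)/T) + θ) * m (u (n+1) (t n)) (u (n+1) (t n)))
          - ((T * Real.exp ((T - t n)/T) + θ) * m (u n (t n) - u (n+1) (t n)) (u (n+1) (t n))
              + m (u n (t n) - u (n+1) (t n))
                  ((∑ ℓ, (q (n+1) ℓ).eval (t n) • e ℓ)
                    - (T * Real.exp ((T - t n)/T)) • u (n+1) (t n))) := by
    intro n hn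
    obtain ⟨hn1, hn2⟩ := Finset.mem_Icc.mp hn
    rw [node_algebra m hsym]
    have hmem : (n+1) ∈ Finset.Icc 1 (N'+1) := Finset.mem_Icc.mpr ⟨by omega, by omega⟩
    have hη := kEta (n+1) hmem
    simp only [Nat.add_sub_cancel] at hη
    have hJ := (hbound (u n (t n) - u (n+1) (t n))).1
    have htnT : t n ≤ T := by
      have h := tmono (N'+1) le_rfl n (by omega)
      rwa [htN] at h
    have hγ : T ≤ T * Real.exp ((T - t n)/T) := by
      nth_rewrite 1 [← mul_one T]
      exact mul_le_mul_of_nonneg_left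
        (Real.one_le_exp (div_nonneg (by linarith) hT.le)) hT.le
    have hyoung := young_bound m hsym hμs hμb0 hθ hbound (u n (t n) - u (n+1) (t n))
      ((∑ ℓ, (q (n+1) ℓ).eval (t n) • e ℓ) - (T * Real.exp ((T - t n)/T)) • u (n+1) (t n))
    have habs := le_abs_self (m (u n (t n) - u (n+1) (t n))
      ((∑ ℓ, (q (n+1) ℓ).eval (t n) • e ℓ) - (T * Real.exp ((T - t n)/T)) • u (n+1) (t n)))
    have step1 : (T + θ) * (μs * ‖u n (t n) - u (n+1) (t n)‖^2)
        ≤ (T * Real.exp ((T - t n)/T) + θ)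
            * m (u n (t n) - u (n+1) (t n)) (u n (t n) - u (n+1) (t n)) :=
      mul_le_mul (by linarith) hJ (by positivity) (by positivity)
    have step2 : μb^2/(2*(θ*μs))
          * ‖(∑ ℓ, (q (n+1) ℓ).eval (t n) • e ℓ)
              - (T * Real.exp ((T - t n)/T)) • u (n+1) (t n)‖^2
        ≤ μb^2/(2*(θ*μs)) * (Cr * Real.exp 1 ^ 2 * τ * ∫ s in t n..t (n+1), ‖u (n+1) s‖^2) :=
      mul_le_mul_of_nonneg_left hη (by positivity)
    linarith [hyoung, habs, step1, step2]
  have initLB :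
      μs * (T/2) * ‖u 1 0‖^2
        - (μb^2/(2*(θ*μs)) * (Cr * Real.exp 1 ^ 2 * τ)) * (∫ s in (0:ℝ)..t 1, ‖u 1 s‖^2)
      ≤ (1/2) * ((T * Real.exp ((T - 0)/T) + θ) * m (u 1 0) (u 1 0))
        + m (u 1 0) ((∑ ℓ, (q 1 ℓ).eval 0 • e ℓ) - (T * Real.exp ((T - 0)/T)) • u 1 0) := by
    have hmem : (1:ℕ) ∈ Finset.Icc 1 (N'+1) := Finset.mem_Icc.mpr ⟨le_rfl, by omega⟩
    have hη := kEta 1 hmem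
    simp only [Nat.sub_self] at hη
    rw [ht0] at hη
    have hJ := (hbound (u 1 0)).1
    have hγ : T ≤ T * Real.exp ((T - 0)/T) := by
      nth_rewrite 1 [← mul_one T]
      exact mul_le_mul_of_nonneg_left
        (Real.one_le_exp (div_nonneg (by linarith) hT.le)) hT.le
    have hyoung := young_bound m hsym hμs hμb0 hθ hbound (u 1 0)
      ((∑ ℓ, (q 1 ℓ).eval 0 • e ℓ) - (T * Real.exp ((T - 0)/T)) • u 1 0)
    have habs := le_abs_self (m (u 1 0)
      ((∑ ℓ, (q 1 ℓ).eval 0 • e ℓ) - (T * Real.exp ((T - 0)/T)) • u 1 0))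
    have hmη := neg_abs_le (m (u 1 0)
      ((∑ ℓ, (q 1 ℓ).eval 0 • e ℓ) - (T * Real.exp ((T - 0)/T)) • u 1 0))
    have step1 : (T + θ) * (μs * ‖u 1 0‖^2)
        ≤ (T * Real.exp ((T - 0)/T) + θ) * m (u 1 0) (u 1 0) :=
      mul_le_mul (by linarith) hJ (by positivity) (by positivity)
    have step2 : μb^2/(2*(θ*μs))
          * ‖(∑ ℓ, (q 1 ℓ).eval 0 • e ℓ) - (T * Real.exp ((T - 0)/T)) • u 1 0‖^2
        ≤ μb^2/(2*(θ*μs)) * (Cr * Real.exp 1 ^ 2 * τ * ∫ s in (0:ℝ)..t 1, ‖u 1 s‖^2) :=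
      mul_le_mul_of_nonneg_left hη (by positivity)
    linarith [hyoung, habs, hmη, step1, step2]
  have hBN : μs * (T/2) * ‖u (N'+1) T‖^2
      ≤ (1/2) * ((T + θ) * m (u (N'+1) T) (u (N'+1) T)) := by
    have hJ := (hbound (u (N'+1) T)).1
    have h3 : 0 ≤ m (u (N'+1) T) (u (N'+1) T) := le_trans (by positivity) hJ
    have h4 := mul_le_mul_of_nonneg_left hJ hT.le
    have h5 : 0 ≤ θ * m (u (N'+1) T) (u (N'+1) T) := mul_nonneg hθ.le h3
    linarith
  -- summed lower bounds
  have hC2 : (μs/2) * (∑ n ∈ Finset.Icc 1 (N'+1), ∫ s in t (n-1)..t n, ‖u n s‖^2)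
      ≤ ∑ n ∈ Finset.Icc 1 (N'+1),
          (1/(2*T)) * ∫ s in t (n-1)..t n, (T * Real.exp ((T - s)/T)) * m (u n s) (u n s) := by
    rw [Finset.mul_sum]
    exact Finset.sum_le_sum kLB
  have hNode := Finset.sum_le_sum nodeLB
  have sumNode2 : (∑ n ∈ Finset.Icc 1 N',
        (μs * (T/2) * ‖u n (t n) - u (n+1) (t n)‖^2
          - (μb^2/(2*(θ*μs)) * (Cr * Real.exp 1 ^ 2 * τ))
              * (∫ s in t n..t (n+1), ‖u (n+1) s‖^2)))
      = μs * (T/2) * (∑ n ∈ Finset.Icc 1 N', ‖u n (t n) - u (n+1) (t n)‖^2)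
        - (μb^2/(2*(θ*μs)) * (Cr * Real.exp 1 ^ 2 * τ))
            * ∑ n ∈ Finset.Icc 1 N', ∫ s in t n..t (n+1), ‖u (n+1) s‖^2 := by
    rw [Finset.sum_sub_distrib, Finset.mul_sum, Finset.mul_sum]
  have hcomb : (∑ n ∈ Finset.Icc 1 N',
        ((1/2) * ((T * Real.exp ((T - t n)/T) + θ) * m (u n (t n)) (u n (t n)))
          - (1/2) * ((T * Real.exp ((T - t n)/T) + θ) * m (u (n+1) (t n)) (u (n+1) (t n)))))
      - (∑ n ∈ Finset.Icc 1 N',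
          ((T * Real.exp ((T - t n)/T) + θ) * m (u n (t n) - u (n+1) (t n)) (u (n+1) (t n))
            + m (u n (t n) - u (n+1) (t n))
                ((∑ ℓ, (q (n+1) ℓ).eval (t n) • e ℓ)
                  - (T * Real.exp ((T - t n)/T)) • u (n+1) (t n))))
      = ∑ n ∈ Finset.Icc 1 N',
          ((1/2) * ((T * Real.exp ((T - t n)/T) + θ) * m (u n (t n)) (u n (t n)))
            - (1/2) * ((T * Real.exp ((T - t n)/T) + θ) * m (u (n+1) (t n)) (u (n+1) (t n)))
            - ((T * Real.exp ((T - t n)/T) + θ)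
                  * m (u n (t n) - u (n+1) (t n)) (u (n+1) (t n))
                + m (u n (t n) - u (n+1) (t n))
                    ((∑ ℓ, (q (n+1) ℓ).eval (t n) • e ℓ)
                      - (T * Real.exp ((T - t n)/T)) • u (n+1) (t n)))) :=
    (Finset.sum_sub_distrib _ _).symm
  have Xshift : (∫ s in (0:ℝ)..t 1, ‖u 1 s‖^2)
      + (∑ n ∈ Finset.Icc 1 N', ∫ s in t n..t (n+1), ‖u (n+1) s‖^2)
      = ∑ n ∈ Finset.Icc 1 (N'+1), ∫ s in t (n-1)..t n, ‖u n s‖^2 := by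
    rw [sum_Icc_shift (fun n => ∫ s in t (n-1)..t n, ‖u n s‖^2) N']
    simp only [Nat.add_sub_cancel, Nat.sub_self]
    rw [ht0]
  have RHSeq : μs * ((1 / 2 - (μb / μs) ^ 2 * (Cr * Real.exp 1 ^ 2) * τ / (2 * θ)) *
        (∑ n ∈ Finset.Icc 1 (N'+1), ∫ s in t (n-1)..t n, ‖u n s‖^2)
      + T * ((1 / 2) * (‖u (N'+1) T‖ ^ 2 +
          (∑ n ∈ Finset.Icc 1 N', ‖u n (t n) - u (n + 1) (t n)‖ ^ 2) +
          ‖u 1 0‖ ^ 2)))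
      = (μs/2) * (∑ n ∈ Finset.Icc 1 (N'+1), ∫ s in t (n-1)..t n, ‖u n s‖^2)
        - (μb^2/(2*(θ*μs)) * (Cr * Real.exp 1 ^ 2 * τ))
            * (∑ n ∈ Finset.Icc 1 (N'+1), ∫ s in t (n-1)..t n, ‖u n s‖^2)
        + μs * (T/2) * (∑ n ∈ Finset.Icc 1 N', ‖u n (t n) - u (n + 1) (t n)‖ ^ 2)
        + μs * (T/2) * ‖u (N'+1) T‖^2 + μs * (T/2) * ‖u 1 0‖^2 := by
    field_simp
    ring
  have Xshift2 := congrArg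
    (fun z => μb^2/(2*(θ*μs)) * (Cr * Real.exp 1 ^ 2 * τ) * z) Xshift
  simp only [mul_add] at Xshift2
  rw [S1, S2, S3, Sinit, RHSeq]
  rw [sumNode2] at hNode
  linarith [hNode, hcomb, hC2, initLB, hBN, Xshift2]
end
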